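/- arXiv:2010.00147 — 2 statements merged into one kernel-verified Lean document; each statement's English description precedes it below -/
import Mathlib

section
/- For every partition λ, the power sum symmetric functions expand into the chromatic basis generated by the family of stars via p_λ = Σ_{α ⊆ λ} (−1)^{|α|−ℓ(λ)} C(λ_1−1, α_1−1)⋯C(λ_{ℓ(λ)}−1, α_{ℓ(λ)}−1) X_{S_{α̃·(1^{|λ|−|α|})}}, and conversely X_{S_λ} = Σ_{α ⊆ λ} (−1)^{|α|−ℓ(λ)} C(λ_1−1, α_1−1)⋯C(λ_{ℓ(λ)}−1, α_{ℓ(λ)}−1) p_{α̃·(1^{|λ|−|α|})}, where α ⊆ λ means ℓ(α) = ℓ(λ) and α_i ≤ λ_i for all i, and C(n,k) denotes the binomial coefficient. -/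
open scoped BigOperators
open scoped Classical

namespace CSF

/-! ## Extended chromatic symmetric functions of multigraphs

A (multi)graph on a vertex type `V` is given by a multiset of edges `E : Multiset (Sym2 V)`
(loops and multiple edges allowed).  Colours are positive integers `ℕ+`, and the
(extended) chromatic symmetric function lives in `MvPowerSeries ℕ+ ℚ`, the power series
in the commuting variables `x_j`, `j : ℕ+`. -/

/-- A proper colouring of the multigraph with edge multiset `E`. -/
def Proper {V C : Type*} (E : Multiset (Sym2 V)) (κ : V → C) : Prop :=
  ∀ u v : V, s(u, v) ∈ E → κ u ≠ κ v

/-- The monomial `∏_v x_{κ(v)}^{w(v)}`, recorded as its exponent vector. -/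
noncomputable def mon {V : Type*} [Fintype V] (w : V → ℕ) (κ : V → ℕ+) : ℕ+ →₀ ℕ :=
  ∑ v, Finsupp.single (κ v) (w v)

/-- The extended chromatic symmetric function `X_{(G,w)}` of the weighted graph with
edge multiset `E` and vertex weights `w`: the coefficient of a monomial `m` is the number
of proper colourings `κ` with `∏_v x_{κ(v)}^{w(v)} = x^m`. -/
noncomputable def X {V : Type*} [Fintype V] (E : Multiset (Sym2 V)) (w : V → ℕ) :
    MvPowerSeries ℕ+ ℚ :=
  fun m => (Nat.card {κ : V → ℕ+ // Proper E κ ∧ mon w κ = m} : ℚ)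

/-- The chromatic polynomial `χ_G(k)`: the number of proper colourings with `k` colours. -/
noncomputable def chrom {V : Type*} [Fintype V] (E : Multiset (Sym2 V)) (k : ℕ) : ℕ :=
  Nat.card {κ : V → Fin k // Proper E κ}

/-- Edge multiset of the labelled path `P_n` on `Fin n`: edges `v_i v_{i+1}`. -/
def pathE (n : ℕ) : Multiset (Sym2 (Fin n)) :=
  ((Finset.univ : Finset (Fin n × Fin n)).filter
    (fun p => (p.1 : ℕ) + 1 = (p.2 : ℕ))).val.map (fun p => s(p.1, p.2))

/-- Edge multiset of the labelled star `S_n` on `Fin n`: edges `v_i v_n`, `i ∈ [n-1]`. -/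
def starE (n : ℕ) : Multiset (Sym2 (Fin n)) :=
  ((Finset.univ : Finset (Fin n × Fin n)).filter
    (fun p => (p.1 : ℕ) + 1 < n ∧ (p.2 : ℕ) + 1 = n)).val.map (fun p => s(p.1, p.2))

/-- Edge multiset of a disjoint union of graphs on `Fin (m i)`, `i : Fin k`. -/
noncomputable def unionE {k : ℕ} {m : Fin k → ℕ}
    (Es : ∀ i, Multiset (Sym2 (Fin (m i)))) : Multiset (Sym2 (Σ i, Fin (m i))) :=
  ∑ i, (Es i).map (Sym2.map (fun v => ⟨i, v⟩))

/-- Extended chromatic symmetric function of a disjoint union of weighted graphs. -/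
noncomputable def Xunion {k : ℕ} {m : Fin k → ℕ}
    (Es : ∀ i, Multiset (Sym2 (Fin (m i)))) (ws : ∀ i, Fin (m i) → ℕ) :
    MvPowerSeries ℕ+ ℚ :=
  X (unionE Es) (fun v => ws v.1 v.2)

/-- `X_{P_l}`: chromatic symmetric function of the disjoint union of unweighted paths
`P_{l_1} ∪ ⋯ ∪ P_{l_k}`. -/
noncomputable def XPaths (l : List ℕ) : MvPowerSeries ℕ+ ℚ :=
  Xunion (m := fun i : Fin l.length => l.get i) (fun i => pathE (l.get i)) (fun _ _ => 1)

/-- `X_{S_l}`: chromatic symmetric function of a disjoint union of unweighted stars. -/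
noncomputable def XStars (l : List ℕ) : MvPowerSeries ℕ+ ℚ :=
  Xunion (m := fun i : Fin l.length => l.get i) (fun i => starE (l.get i)) (fun _ _ => 1)

/-- `X_{(P_{ℓ(α)}, α)}`: the extended chromatic symmetric function of the path on
`ℓ(α)` vertices whose `i`-th vertex has weight `α_i`. -/
noncomputable def Xwpath (α : List ℕ) : MvPowerSeries ℕ+ ℚ :=
  X (pathE α.length) (fun i => α.get i)

/-! ## Symmetric functions -/

/-- The power sum symmetric function `p_i = ∑_j x_j^i`. -/
noncomputable def pS (i : ℕ) : MvPowerSeries ℕ+ ℚ :=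
  fun m => if ∃ j : ℕ+, m = Finsupp.single j i then 1 else 0

/-- The complete homogeneous symmetric function `h_i`. -/
noncomputable def hS (i : ℕ) : MvPowerSeries ℕ+ ℚ :=
  fun m => if (m.sum fun _ k => k) = i then 1 else 0

/-- The elementary symmetric function `e_i`. -/
noncomputable def eS (i : ℕ) : MvPowerSeries ℕ+ ℚ :=
  fun m => if ((m.sum fun _ k => k) = i ∧ ∀ j, m j ≤ 1) then 1 else 0

/-- `p_λ = p_{λ_1} ⋯ p_{λ_k}`. -/
noncomputable def pProd (l : List ℕ) : MvPowerSeries ℕ+ ℚ := (l.map pS).prod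
/-- `h_λ = h_{λ_1} ⋯ h_{λ_k}`. -/
noncomputable def hProd (l : List ℕ) : MvPowerSeries ℕ+ ℚ := (l.map hS).prod
/-- `e_λ = e_{λ_1} ⋯ e_{λ_k}`. -/
noncomputable def eProd (l : List ℕ) : MvPowerSeries ℕ+ ℚ := (l.map eS).prod

/-- The algebra `Sym` of symmetric functions, realized as the subalgebra of
`MvPowerSeries ℕ+ ℚ` generated by the elementary symmetric functions. -/
noncomputable def SymAlg : Subalgebra ℚ (MvPowerSeries ℕ+ ℚ) :=
  Algebra.adjoin ℚ {f | ∃ i : ℕ, f = eS (i + 1)}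

/-- Sort a list into weakly decreasing order (the underlying partition `α̃`). -/
def sortDesc (l : List ℕ) : List ℕ := List.insertionSort (· ≥ ·) l

/-- Partitions: weakly decreasing lists of positive integers. -/
abbrev PartL : Type := {l : List ℕ // l.Pairwise (· ≥ ·) ∧ ∀ x ∈ l, 0 < x}

/-! ## Compositions -/

/-- All coarsenings of a composition: lists obtained by summing adjacent blocks. -/
def coarsenings : List ℕ → List (List ℕ)
  | [] => [[]]
  | a :: l =>
    (coarsenings l).map (fun β => a :: β) ++
      (coarsenings l).filterMap (fun β =>
        match β with
        | [] => none
        | b :: β' => some ((a + b) :: β'))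

/-- The ribbon Schur function `r_α = ∑_{β ≽ α} (-1)^{ℓ(α) - ℓ(β)} h_{β̃}`. -/
noncomputable def ribbon (α : List ℕ) : MvPowerSeries ℕ+ ℚ :=
  ((coarsenings α).map fun β =>
    ((-1 : ℚ) ^ (α.length - β.length)) • hProd (sortDesc β)).sum

lemma sum_take_get_le (α : List ℕ) (b : Fin α.length) :
    (α.take b).sum + α.get b ≤ α.sum := by
  have h1 : (α.take (b + 1)).sum = (α.take b).sum + α[b] := List.sum_take_succ α b b.isLt
  have h2 : (α.take (b + 1)).sum ≤ α.sum := by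
    conv_rhs => rw [← List.take_append_drop (b + 1) α]
    rw [List.sum_append]
    exact Nat.le_add_right _ _
  simpa [List.get_eq_getElem, ← h1] using h2

/-- Shift a graph on `Fin m` by an offset `o` inside `Fin n`. -/
def shiftE {m n : ℕ} (o : ℕ) (h : o + m ≤ n) (E : Multiset (Sym2 (Fin m))) :
    Multiset (Sym2 (Fin n)) :=
  E.map (Sym2.map (fun v : Fin m => (⟨o + (v : ℕ), by have := v.isLt; omega⟩ : Fin n)))

/-- The labelled graph `G_{α_1} | G_{α_2} | ⋯ | G_{α_k}` on `Fin (α₁ + ⋯ + α_k)`: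
consecutive blocks of vertices carry the graphs `Gr (α_i)`. -/
noncomputable def concatE (α : List ℕ) (Gr : (k : ℕ) → Multiset (Sym2 (Fin k))) :
    Multiset (Sym2 (Fin α.sum)) :=
  ∑ b : Fin α.length,
    shiftE ((α.take b).sum) (sum_take_get_le α b) (Gr (α.get b))

/-- `set(α) = {α_1, α_1+α_2, …, α_1+⋯+α_{ℓ(α)-1}} ⊆ [n-1]`. -/
def setC (α : List ℕ) : Finset ℕ :=
  ((List.range (α.length - 1)).map (fun j => (α.take (j + 1)).sum)).toFinset

/-- The labelled graph on `Fin n` whose edges are `v_i v_{i+1}` for `i ∈ S` (1-based). -/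
def edgesFromSet (n : ℕ) (S : Finset ℕ) : Multiset (Sym2 (Fin n)) :=
  ((Finset.univ : Finset (Fin n × Fin n)).filter
    (fun p => (p.1 : ℕ) + 1 = (p.2 : ℕ) ∧ (p.2 : ℕ) ∈ S)).val.map (fun p => s(p.1, p.2))

/-- `γ = α^c`, the complement composition: the composition of `|α|` with
`set(γ) = [n-1] − set(α)`. -/
def IsComplementOf (γ α : List ℕ) : Prop :=
  (∀ x ∈ γ, 0 < x) ∧ γ.sum = α.sum ∧ setC γ = Finset.Ioo 0 α.sum \ setC α

/-- Near concatenation `α ⊙ β` of compositions. -/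
def nconcat : List ℕ → List ℕ → List ℕ
  | [], β => β
  | [a], [] => [a]
  | [a], b :: β => (a + b) :: β
  | a :: l, β => a :: nconcat l β

/-- `β^{⊙ i}`, the `i`-fold near concatenation of `β` with itself. -/
def npowOdot (β : List ℕ) : ℕ → List ℕ
  | 0 => []
  | i + 1 => nconcat (npowOdot β i) β

/-- Composition of compositions: `α ∘ β = β^{⊙α_1} · ⋯ · β^{⊙α_{ℓ(α)}}`. -/
def compOp (α β : List ℕ) : List ℕ := (α.map (npowOdot β)).flatten

/-- The equivalence `α ∼ β`: `α` and `β` have `∘`-factorizations whose factors agree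
up to reversal.  (`[1]` is a two-sided identity for `∘`, so the empty fold is harmless.) -/
def simRel (α β : List ℕ) : Prop :=
  ∃ L M : List (List ℕ),
    List.Forall₂ (fun γ δ => (γ ≠ [] ∧ ∀ x ∈ γ, 0 < x) ∧ (δ = γ ∨ δ = γ.reverse)) L M ∧
    α = L.foldr compOp [1] ∧ β = M.foldr compOp [1]

/-- A trivial factorization `α = β ∘ γ`. -/
def TrivialFac (β γ : List ℕ) : Prop :=
  β = [1] ∨ γ = [1] ∨ (β.length = 1 ∧ γ.length = 1) ∨
    ((∀ x ∈ β, x = 1) ∧ ∀ x ∈ γ, x = 1)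

/-- `L` is an irreducible factorization of `α`. -/
def IsIrreducibleFac (α : List ℕ) (L : List (List ℕ)) : Prop :=
  (∀ γ ∈ L, γ ≠ [] ∧ ∀ x ∈ γ, 0 < x) ∧
  α = L.foldr compOp [1] ∧
  (∀ i : ℕ, ∀ h : i + 1 < L.length,
    ¬ TrivialFac (L.get ⟨i, by omega⟩) (L.get ⟨i + 1, h⟩)) ∧
  (∀ γ ∈ L, ∀ δ ε : List ℕ, δ ≠ [] → (∀ x ∈ δ, 0 < x) → ε ≠ [] → (∀ x ∈ ε, 0 < x) →
    γ = compOp δ ε → TrivialFac δ ε)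

/-- All compositions of `n` (lists of positive integers with sum `n`). -/
def comps : ℕ → List (List ℕ)
  | 0 => [[]]
  | n + 1 => (List.range (n + 1)).attach.flatMap fun j =>
      (comps j.1).map (fun c => (n + 1 - j.1) :: c)
  decreasing_by exact List.mem_range.mp j.2

/-- All refinements `α ≼ λ` of a composition `λ`. -/
def refinements : List ℕ → List (List ℕ)
  | [] => [[]]
  | a :: l => (comps a).flatMap fun c => (refinements l).map (fun r => c ++ r)

/-- All compositions `α ⊆ λ`: `ℓ(α) = ℓ(λ)` and `1 ≤ α_i ≤ λ_i`. -/
def boundedLists : List ℕ → List (List ℕ)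
  | [] => [[]]
  | a :: l => (List.range a).flatMap fun j => (boundedLists l).map (fun r => (j + 1) :: r)

/-! ## Expansions of weighted graphs -/

/-- Given a decomposition `L` of `β` witnessing `β ≼ α`, vertex `a` of `H` is in the block
`R(v_v)` (0-based `v`) when `a` lies among the consecutively labelled vertices of block `v`. -/
def inBlock (L : List (List ℕ)) (v a : ℕ) : Prop :=
  ((L.take v).map List.length).sum ≤ a ∧ a < ((L.take (v + 1)).map List.length).sum

/-- The relation `a R b`: `a` and `b` lie in a common block `R(v)`. -/
def Rrel (L : List (List ℕ)) (a b : ℕ) : Prop :=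
  ∃ v : ℕ, inBlock L v a ∧ inBlock L v b

/-! ## The lattice of contractions and its Möbius function -/

/-- The restriction of the graph `E` to `B` is connected. -/
def ConnOn {V : Type*} (E : Multiset (Sym2 V)) (B : Set V) : Prop :=
  ∀ a ∈ B, ∀ b ∈ B, Relation.ReflTransGen (fun x y => x ∈ B ∧ y ∈ B ∧ s(x, y) ∈ E) a b

/-- A connected set partition of the graph `E` (as a setoid on the vertices). -/
def ConnPart {V : Type*} (E : Multiset (Sym2 V)) (σ : Setoid V) : Prop :=
  ∀ v : V, ConnOn E {u | σ.r u v}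

/-- The lattice of contractions `L_G`: connected set partitions ordered by refinement. -/
def LContr {V : Type*} (E : Multiset (Sym2 V)) : Type _ := {σ : Setoid V // ConnPart E σ}

noncomputable instance setoidFintype {V : Type*} [Fintype V] : Fintype (Setoid V) :=
  Fintype.ofInjective (fun s : Setoid V => s.r)
    (fun s t h => by cases s; cases t; simp only at h; subst h; rfl)

noncomputable instance {V : Type*} [Fintype V] (E : Multiset (Sym2 V)) : Fintype (LContr E) :=
  letI := Classical.decPred (ConnPart E)
  Subtype.fintype _

instance {V : Type*} (E : Multiset (Sym2 V)) : PartialOrder (LContr E) :=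
  Subtype.partialOrder _

noncomputable instance {V : Type*} [Fintype V] (E : Multiset (Sym2 V)) :
    LocallyFiniteOrder (LContr E) :=
  letI := Classical.decRel (α := LContr E) (· < ·)
  letI := Classical.decRel (α := LContr E) (· ≤ ·)
  Fintype.toLocallyFiniteOrder

/-- The Möbius function of the lattice of contractions. -/
noncomputable def mobLC {V : Type*} [Fintype V] (E : Multiset (Sym2 V))
    (x y : LContr E) : ℚ :=
  letI := Classical.decEq (LContr E)
  IncidenceAlgebra.mu ℚ x y

/-- `p_{type(π,w)}`: the product over the blocks of `π` of `p_{(total weight of block)}`. -/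
noncomputable def ptype {V : Type*} [Fintype V] (σ : Setoid V) (w : V → ℕ) :
    MvPowerSeries ℕ+ ℚ :=
  letI := Classical.decEq (Quotient σ)
  letI := @Quotient.fintype V _ σ (Classical.decRel _)
  ∏ c : Quotient σ, pS (∑ v : V, if Quotient.mk σ v = c then w v else 0)

/-- `0̂`, the minimal element of the lattice of contractions: each vertex is its own block. -/
def botLC {V : Type*} (E : Multiset (Sym2 V)) : LContr E :=
  ⟨⊥, by
    intro v a ha b hb
    have ha' : a = v := ha
    have hb' : b = v := hb
    subst ha'; subst hb'; exact Relation.ReflTransGen.refl⟩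

/-! ## Composition of a composition with a weighted graph -/

section comp
variable {V : Type*} [Fintype V]

/-- The gluing relation: for `i ∈ S` (1-based), identify the vertex `z` of copy `i`
with the vertex `a` of copy `i + 1` (0-based copies `i - 1` and `i`). -/
def glueRel (a z : V) (n : ℕ) (S : Finset ℕ) : (Fin n × V) → (Fin n × V) → Prop :=
  fun x y => ∃ i ∈ S, ∃ (h1 : i - 1 < n) (h2 : i < n),
    x = (⟨i - 1, h1⟩, z) ∧ y = (⟨i, h2⟩, a)

def glueSetoid (a z : V) (n : ℕ) (S : Finset ℕ) : Setoid (Fin n × V) :=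
  Relation.EqvGen.setoid (glueRel a z n S)

/-- Vertices of the graph obtained from `n` copies of a graph on `V` by contracting the
connecting edges `z_i a_{i+1}`, `i ∈ S`. -/
def compV (a z : V) (n : ℕ) (S : Finset ℕ) : Type _ := Quotient (glueSetoid a z n S)

noncomputable instance (a z : V) (n : ℕ) (S : Finset ℕ) : Fintype (compV a z n S) :=
  @Quotient.fintype _ _ (glueSetoid a z n S) (Classical.decRel _)

/-- Edges: all edges of the `n` copies of `E`, together with the connecting edges
`z_i a_{i+1}` for `i ∈ [n-1] − S` (the ones not contracted). -/
noncomputable def compE (E : Multiset (Sym2 V)) (a z : V) (n : ℕ) (S : Finset ℕ) :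
    Multiset (Sym2 (compV a z n S)) :=
  (∑ i : Fin n, E.map (Sym2.map fun v =>
      (Quotient.mk (glueSetoid a z n S) (i, v) : compV a z n S)))
  + ((Finset.Ioo 0 n \ S).attach.val.map fun i =>
      s((Quotient.mk (glueSetoid a z n S)
          (⟨i.1 - 1, by
            have := i.2; simp only [Finset.mem_sdiff, Finset.mem_Ioo] at this; omega⟩, z) :
            compV a z n S),
        (Quotient.mk (glueSetoid a z n S)
          (⟨i.1, by
            have := i.2; simp only [Finset.mem_sdiff, Finset.mem_Ioo] at this; omega⟩, a) :
            compV a z n S)))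

/-- Weights: a contracted vertex receives the sum of the weights of its constituents. -/
noncomputable def compW (w : V → ℕ) (a z : V) (n : ℕ) (S : Finset ℕ) :
    compV a z n S → ℕ :=
  fun c => ∑ x : Fin n × V,
    if (Quotient.mk (glueSetoid a z n S) x : compV a z n S) = c then w x.2 else 0

/-- `X_{α ∘ (G,w)}`: take `|α|` copies of `(G,w)`, join successive copies by edges
`z_i a_{i+1}`, and contract exactly the connecting edges with `i ∈ set(α^c)`. -/
noncomputable def Xcomp (E : Multiset (Sym2 V)) (w : V → ℕ) (a z : V) (α : List ℕ) :
    MvPowerSeries ℕ+ ℚ :=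
  X (compE E a z α.sum (Finset.Ioo 0 α.sum \ setC α))
    (compW w a z α.sum (Finset.Ioo 0 α.sum \ setC α))

end comp


/-! ### Auxiliary development for the main theorem -/

section MainProof

open Finset

lemma mon_apply_self {V : Type*} [Fintype V] (w : V → ℕ) (κ : V → ℕ+) (v : V) :
    w v ≤ mon w κ (κ v) := by
  have h : mon w κ (κ v) = ∑ u : V, (Finsupp.single (κ u) (w u)) (κ v) := by
    simp only [mon]; exact Finsupp.finset_sum_apply _ _ _
  rw [h]
  have h2 := Finset.single_le_sum (f := fun u => (Finsupp.single (κ u) (w u)) (κ v))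
    (fun i _ => Nat.zero_le _) (Finset.mem_univ v)
  simpa using h2

lemma finite_mon {V : Type*} [Fintype V] {w : V → ℕ} (hw : ∀ v, 0 < w v) (m : ℕ+ →₀ ℕ) :
    Finite {κ : V → ℕ+ // mon w κ = m} := by
  have hmem : ∀ (x : {κ : V → ℕ+ // mon w κ = m}) (v : V), x.1 v ∈ m.support := by
    intro x v
    rw [Finsupp.mem_support_iff]
    have h1 := mon_apply_self w x.1 v
    rw [x.2] at h1
    have h2 := hw v
    omega
  have hinj : Function.Injective
      (fun x : {κ : V → ℕ+ // mon w κ = m} =>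
        (fun v => (⟨x.1 v, hmem x v⟩ : {j : ℕ+ // j ∈ m.support}))) := by
    intro a b hab
    apply Subtype.ext; funext v
    exact congrArg Subtype.val (congrFun hab v)
  exact Finite.of_injective _ hinj

lemma finite_mon_and {V : Type*} [Fintype V] {w : V → ℕ} (hw : ∀ v, 0 < w v)
    (Q : (V → ℕ+) → Prop) (m : ℕ+ →₀ ℕ) :
    Finite {κ : V → ℕ+ // Q κ ∧ mon w κ = m} := by
  haveI := finite_mon hw m
  refine Finite.of_injective
    (fun x : {κ : V → ℕ+ // Q κ ∧ mon w κ = m} => (⟨x.1, x.2.2⟩ : {κ : V → ℕ+ // mon w κ = m}))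
    ?_
  rintro ⟨a, ha⟩ ⟨b, hb⟩ h
  simpa using congrArg Subtype.val h

lemma Proper_add_iff {V' C : Type*} (E F : Multiset (Sym2 V')) (κ : V' → C) :
    Proper (E + F) κ ↔ Proper E κ ∧ Proper F κ := by
  constructor
  · intro h
    exact ⟨fun u v hm => h u v (Multiset.mem_add.2 (Or.inl hm)),
      fun u v hm => h u v (Multiset.mem_add.2 (Or.inr hm))⟩
  · rintro ⟨h1, h2⟩ u v hm
    rcases Multiset.mem_add.1 hm with h | h
    · exact h1 u v h
    · exact h2 u v h

lemma Proper_map_iff {A B C : Type*} (f : A → B) (E : Multiset (Sym2 A)) (κ : B → C) :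
    Proper (E.map (Sym2.map f)) κ ↔ Proper E (κ ∘ f) := by
  constructor
  · intro h a b hab
    exact h (f a) (f b) (Multiset.mem_map.2 ⟨s(a, b), hab, Sym2.map_pair_eq f a b⟩)
  · intro h u v huv
    obtain ⟨e, he, hmap⟩ := Multiset.mem_map.1 huv
    induction e using Sym2.ind with
    | _ a b =>
      rw [Sym2.map_pair_eq] at hmap
      rcases Sym2.eq_iff.1 hmap with ⟨h1, h2⟩ | ⟨h1, h2⟩
      · rw [← h1, ← h2]; exact h a b he
      · rw [← h1, ← h2]; exact (h a b he).symm

lemma Proper_zero {V' C : Type*} (κ : V' → C) : Proper (0 : Multiset (Sym2 V')) κ :=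
  fun _ _ h => absurd h (Multiset.notMem_zero _)

lemma mon_comp_equiv {V V₂ : Type*} [Fintype V] [Fintype V₂] (e : V ≃ V₂)
    (w : V₂ → ℕ) (κ : V₂ → ℕ+) :
    mon (w ∘ e) (κ ∘ e) = mon w κ := by
  simp only [mon]
  exact Fintype.sum_equiv e _ _ (fun v => rfl)

lemma mon_sum_elim {V₁ V₂ : Type*} [Fintype V₁] [Fintype V₂]
    (w₁ : V₁ → ℕ) (w₂ : V₂ → ℕ) (κ : V₁ ⊕ V₂ → ℕ+) :
    mon (Sum.elim w₁ w₂) κ = mon w₁ (κ ∘ Sum.inl) + mon w₂ (κ ∘ Sum.inr) := by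
  simp only [mon]
  rw [Fintype.sum_sum_type]
  rfl

lemma X_reindex {V V₂ : Type*} [Fintype V] [Fintype V₂] (e : V ≃ V₂)
    (E : Multiset (Sym2 V)) (w : V₂ → ℕ) :
    X (E.map (Sym2.map e)) w = X E (w ∘ e) := by
  funext m
  show (Nat.card {κ : V₂ → ℕ+ // Proper (E.map (Sym2.map e)) κ ∧ mon w κ = m} : ℚ)
      = (Nat.card {κ : V → ℕ+ // Proper E κ ∧ mon (w ∘ e) κ = m} : ℚ)
  congr 1
  apply Nat.card_congr
  have hcomp : ∀ κ : V → ℕ+, (κ ∘ e.symm) ∘ e = κ := by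
    intro κ; funext v; simp
  refine
    { toFun := fun x => ⟨x.1 ∘ e, (Proper_map_iff (⇑e) E x.1).1 x.2.1, by
        rw [mon_comp_equiv]; exact x.2.2⟩
      invFun := fun y => ⟨y.1 ∘ e.symm, ?_, ?_⟩
      left_inv := ?_
      right_inv := ?_ }
  · rw [Proper_map_iff, hcomp]; exact y.2.1
  · have h := mon_comp_equiv e w (y.1 ∘ e.symm)
    rw [hcomp] at h
    rw [← h]; exact y.2.2
  · intro x; apply Subtype.ext; funext v; simp
  · intro y; apply Subtype.ext; funext v; simp

lemma X_isEmpty {V' : Type*} [Fintype V'] [IsEmpty V'] (E : Multiset (Sym2 V')) (w : V' → ℕ) :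
    X E w = 1 := by
  funext m
  have h1 : (1 : MvPowerSeries ℕ+ ℚ) m = if m = 0 then 1 else 0 :=
    MvPowerSeries.coeff_one m
  show (Nat.card {κ : V' → ℕ+ // Proper E κ ∧ mon w κ = m} : ℚ) = (1 : MvPowerSeries ℕ+ ℚ) m
  rw [h1]
  have hmon : ∀ κ : V' → ℕ+, mon w κ = 0 := by
    intro κ; simp [mon]
  by_cases hm : m = 0
  · subst hm
    rw [if_pos rfl]
    haveI : Unique {κ : V' → ℕ+ // Proper E κ ∧ mon w κ = 0} :=
      { default := ⟨isEmptyElim, fun u _ _ => isEmptyElim u, hmon _⟩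
        uniq := fun a => Subtype.ext (funext isEmptyElim) }
    rw [Nat.card_unique]; norm_num
  · rw [if_neg hm]
    haveI : IsEmpty {κ : V' → ℕ+ // Proper E κ ∧ mon w κ = m} := by
      constructor; rintro ⟨κ, -, hκ⟩
      exact hm (hκ ▸ (hmon κ) ▸ rfl)
    rw [Nat.card_of_isEmpty]; norm_num

lemma X_point {a : ℕ} (ha : 0 < a) :
    X (0 : Multiset (Sym2 (Fin 1))) (fun _ => a) = pS a := by
  funext m
  show (Nat.card {κ : Fin 1 → ℕ+ // Proper (0 : Multiset (Sym2 (Fin 1))) κ ∧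
      mon (fun _ => a) κ = m} : ℚ)
      = if ∃ j : ℕ+, m = Finsupp.single j a then 1 else 0
  have hmon : ∀ κ : Fin 1 → ℕ+, mon (fun _ => a) κ = Finsupp.single (κ 0) a := by
    intro κ; simp [mon]
  by_cases hex : ∃ j : ℕ+, m = Finsupp.single j a
  · obtain ⟨j, rfl⟩ := hex
    rw [if_pos ⟨j, rfl⟩]
    haveI : Unique {κ : Fin 1 → ℕ+ // Proper (0 : Multiset (Sym2 (Fin 1))) κ ∧
        mon (fun _ => a) κ = Finsupp.single j a} :=
      { default := ⟨fun _ => j, Proper_zero _, by rw [hmon]⟩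
        uniq := by
          rintro ⟨κ, -, hκ⟩
          apply Subtype.ext; funext v
          have hv : v = 0 := Subsingleton.elim _ _
          subst hv
          rw [hmon] at hκ
          exact (Finsupp.single_left_inj ha.ne').1 hκ }
    rw [Nat.card_unique]; norm_num
  · rw [if_neg hex]
    haveI : IsEmpty {κ : Fin 1 → ℕ+ // Proper (0 : Multiset (Sym2 (Fin 1))) κ ∧
        mon (fun _ => a) κ = m} := by
      constructor; rintro ⟨κ, -, hκ⟩
      exact hex ⟨κ 0, by rw [← hκ, hmon]⟩
    rw [Nat.card_of_isEmpty]; norm_num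


lemma X_mul_X {V₁ V₂ : Type*} [Fintype V₁] [Fintype V₂]
    (E₁ : Multiset (Sym2 V₁)) (E₂ : Multiset (Sym2 V₂))
    {w₁ : V₁ → ℕ} {w₂ : V₂ → ℕ} (h₁ : ∀ v, 0 < w₁ v) (h₂ : ∀ v, 0 < w₂ v) :
    X (E₁.map (Sym2.map Sum.inl) + E₂.map (Sym2.map Sum.inr)) (Sum.elim w₁ w₂)
      = X E₁ w₁ * X E₂ w₂ := by
  funext m
  have hc : (X E₁ w₁ * X E₂ w₂) m
      = ∑ p ∈ Finset.HasAntidiagonal.antidiagonal m, (X E₁ w₁) p.1 * (X E₂ w₂) p.2 := by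
    have h := MvPowerSeries.coeff_mul (R := ℚ) (n := m) (φ := X E₁ w₁) (ψ := X E₂ w₂)
    simpa [MvPowerSeries.coeff_apply] using h
  rw [hc]
  letI instA : ∀ m₁ : ℕ+ →₀ ℕ, Fintype {κ : V₁ → ℕ+ // Proper E₁ κ ∧ mon w₁ κ = m₁} :=
    fun m₁ => @Fintype.ofFinite _ (finite_mon_and h₁ _ m₁)
  letI instB : ∀ m₂ : ℕ+ →₀ ℕ, Fintype {κ : V₂ → ℕ+ // Proper E₂ κ ∧ mon w₂ κ = m₂} :=
    fun m₂ => @Fintype.ofFinite _ (finite_mon_and h₂ _ m₂)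
  set bigE := E₁.map (Sym2.map Sum.inl) + E₂.map (Sym2.map Sum.inr) with hbigE
  let S := Σ p : {p : (ℕ+ →₀ ℕ) × (ℕ+ →₀ ℕ) // p ∈ Finset.HasAntidiagonal.antidiagonal m},
      ({κ : V₁ → ℕ+ // Proper E₁ κ ∧ mon w₁ κ = p.1.1} ×
       {κ : V₂ → ℕ+ // Proper E₂ κ ∧ mon w₂ κ = p.1.2})
  let f : S → {κ : V₁ ⊕ V₂ → ℕ+ // Proper bigE κ ∧ mon (Sum.elim w₁ w₂) κ = m} :=
    fun x => ⟨Sum.elim x.2.1.1 x.2.2.1, by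
      constructor
      · rw [hbigE, Proper_add_iff, Proper_map_iff, Proper_map_iff,
          Sum.elim_comp_inl, Sum.elim_comp_inr]
        exact ⟨x.2.1.2.1, x.2.2.2.1⟩
      · rw [mon_sum_elim, Sum.elim_comp_inl, Sum.elim_comp_inr, x.2.1.2.2, x.2.2.2.2]
        exact Finset.HasAntidiagonal.mem_antidiagonal.1 x.1.2⟩
  have finj : Function.Injective f := by
    rintro ⟨⟨p, hp⟩, ⟨k1, hk1⟩, ⟨k2, hk2⟩⟩ ⟨⟨q, hq⟩, ⟨l1, hl1⟩, ⟨l2, hl2⟩⟩ hfe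
    have hκ : Sum.elim k1 k2 = Sum.elim l1 l2 := congrArg Subtype.val hfe
    have e1 : k1 = l1 := by funext v; exact congrFun hκ (Sum.inl v)
    have e2 : k2 = l2 := by funext v; exact congrFun hκ (Sum.inr v)
    subst e1; subst e2
    have hpq : p = q := Prod.ext (hk1.2.symm.trans hl1.2) (hk2.2.symm.trans hl2.2)
    subst hpq
    rfl
  have fsurj : Function.Surjective f := by
    rintro ⟨κ, hPκ, hmκ⟩
    have hm' : mon w₁ (κ ∘ Sum.inl) + mon w₂ (κ ∘ Sum.inr) = m := by
      rw [← mon_sum_elim]; exact hmκ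
    have hPc : Proper E₁ (κ ∘ Sum.inl) ∧ Proper E₂ (κ ∘ Sum.inr) := by
      rw [← Proper_map_iff, ← Proper_map_iff]
      rw [hbigE, Proper_add_iff] at hPκ
      exact hPκ
    refine ⟨⟨⟨(mon w₁ (κ ∘ Sum.inl), mon w₂ (κ ∘ Sum.inr)), Finset.HasAntidiagonal.mem_antidiagonal.2 hm'⟩,
      ⟨⟨κ ∘ Sum.inl, hPc.1, rfl⟩, ⟨κ ∘ Sum.inr, hPc.2, rfl⟩⟩⟩, ?_⟩
    apply Subtype.ext
    funext v
    cases v <;> rfl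
  have hcard : Nat.card {κ : V₁ ⊕ V₂ → ℕ+ // Proper bigE κ ∧ mon (Sum.elim w₁ w₂) κ = m}
      = ∑ p ∈ Finset.HasAntidiagonal.antidiagonal m,
          Nat.card {κ : V₁ → ℕ+ // Proper E₁ κ ∧ mon w₁ κ = p.1} *
          Nat.card {κ : V₂ → ℕ+ // Proper E₂ κ ∧ mon w₂ κ = p.2} := by
    rw [← Nat.card_eq_of_bijective f ⟨finj, fsurj⟩]
    rw [Nat.card_eq_fintype_card (α := S), Fintype.card_sigma]
    rw [← Finset.sum_coe_sort (Finset.HasAntidiagonal.antidiagonal m)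
      (fun p => Nat.card {κ : V₁ → ℕ+ // Proper E₁ κ ∧ mon w₁ κ = p.1} *
          Nat.card {κ : V₂ → ℕ+ // Proper E₂ κ ∧ mon w₂ κ = p.2})]
    apply Finset.sum_congr rfl
    intro p _
    rw [Fintype.card_prod, Nat.card_eq_fintype_card, Nat.card_eq_fintype_card]
  show (Nat.card {κ : V₁ ⊕ V₂ → ℕ+ // Proper bigE κ ∧ mon (Sum.elim w₁ w₂) κ = m} : ℚ) = _
  rw [hcard]
  push_cast
  rfl

def sigmaSuccEquiv {k : ℕ} (mm : Fin (k + 1) → ℕ) :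
    (Fin (mm 0) ⊕ (Σ i : Fin k, Fin (mm i.succ))) ≃ (Σ i : Fin (k + 1), Fin (mm i)) where
  toFun x := Sum.elim (fun v => ⟨0, v⟩) (fun y => ⟨y.1.succ, y.2⟩) x
  invFun y := Fin.cases
      (motive := fun i => Fin (mm i) → (Fin (mm 0) ⊕ (Σ i : Fin k, Fin (mm i.succ))))
      (fun v => Sum.inl v) (fun j v => Sum.inr ⟨j, v⟩) y.1 y.2
  left_inv x := by rcases x with v | ⟨j, v⟩ <;> simp
  right_inv y := by
    rcases y with ⟨i, v⟩
    induction i using Fin.cases <;> simp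

lemma Xunion_eq_prod : ∀ (k : ℕ) (mm : Fin k → ℕ) (Es : ∀ i, Multiset (Sym2 (Fin (mm i))))
    (ws : ∀ i, Fin (mm i) → ℕ), (∀ i v, 0 < ws i v) →
    Xunion Es ws = ∏ i, X (Es i) (ws i) := by
  intro k
  induction k with
  | zero =>
    intro mm Es ws _
    haveI : IsEmpty (Σ i : Fin 0, Fin (mm i)) := ⟨fun x => x.1.elim0⟩
    simp only [Xunion]
    rw [X_isEmpty]
    simp
  | succ k ih =>
    intro mm Es ws hw
    set e := sigmaSuccEquiv mm with he
    have hmapsum : ∀ {β γ : Type} (s : Finset (Fin k)) (Ms : Fin k → Multiset β) (g : β → γ),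
        Multiset.map g (∑ i ∈ s, Ms i) = ∑ i ∈ s, (Ms i).map g := by
      intro β γ s Ms g
      exact map_sum (Multiset.mapAddMonoidHom g) Ms s
    have hE : unionE Es = ((Es 0).map (Sym2.map Sum.inl)
        + (unionE (fun i : Fin k => Es i.succ)).map (Sym2.map Sum.inr)).map (Sym2.map e) := by
      rw [Multiset.map_add]
      have h0 : unionE Es = (Es 0).map (Sym2.map (fun v => (⟨0, v⟩ : Σ i : Fin (k+1), Fin (mm i))))
          + ∑ i : Fin k, (Es i.succ).map
            (Sym2.map (fun v => (⟨i.succ, v⟩ : Σ i : Fin (k+1), Fin (mm i)))) := by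
        simp only [unionE]
        rw [Fin.sum_univ_succ]
      rw [h0]
      congr 1
      · rw [Multiset.map_map]
        apply Multiset.map_congr rfl
        intro z _
        rw [Function.comp_apply, Sym2.map_map]
        rfl
      · simp only [unionE]
        rw [hmapsum, hmapsum]
        apply Finset.sum_congr rfl
        intro i _
        rw [Multiset.map_map, Multiset.map_map]
        apply Multiset.map_congr rfl
        intro z _
        simp only [Function.comp_apply]
        rw [Sym2.map_map, Sym2.map_map]
        rfl
    simp only [Xunion]
    rw [hE, X_reindex e _ _]
    have hw' : ((fun v : Σ i : Fin (k+1), Fin (mm i) => ws v.1 v.2) ∘ ⇑e)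
        = Sum.elim (ws 0) (fun y : Σ i : Fin k, Fin (mm i.succ) => ws y.1.succ y.2) := by
      funext z; rcases z with v | ⟨j, v⟩ <;> rfl
    rw [hw']
    rw [X_mul_X (w₁ := ws 0) (w₂ := fun y : Σ i : Fin k, Fin (mm i.succ) => ws y.1.succ y.2)
      _ _ (fun v => hw 0 v) (fun y => hw y.1.succ y.2)]
    have htail : X (unionE (fun i : Fin k => Es i.succ))
        (fun y : Σ i : Fin k, Fin (mm i.succ) => ws y.1.succ y.2)
        = Xunion (fun i : Fin k => Es i.succ) (fun i => ws i.succ) := rfl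
    rw [htail, ih _ _ _ (fun i v => hw i.succ v), Fin.prod_univ_succ]

lemma prod_pS (t : ℕ) (w : Fin t → ℕ) (hw : ∀ v, 0 < w v) :
    (∏ v, pS (w v)) = X (0 : Multiset (Sym2 (Fin t))) w := by
  have h1 : (∏ v, pS (w v)) = ∏ i : Fin t, X (0 : Multiset (Sym2 (Fin 1))) (fun _ => w i) := by
    apply Finset.prod_congr rfl
    intro i _
    exact (X_point (hw i)).symm
  rw [h1, ← Xunion_eq_prod t (fun _ => 1) (fun _ => (0 : Multiset (Sym2 (Fin 1))))
    (fun i _ => w i) (fun i _ => hw i)]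
  simp only [Xunion]
  have hu : unionE (fun _ : Fin t => (0 : Multiset (Sym2 (Fin 1)))) = 0 := by
    simp [unionE]
  rw [hu]
  let e : Fin t ≃ (Σ _ : Fin t, Fin 1) :=
    { toFun := fun i => ⟨i, 0⟩
      invFun := fun y => y.1
      left_inv := fun i => rfl
      right_inv := by
        rintro ⟨i, v⟩
        have hv : v = 0 := Subsingleton.elim _ _
        subst hv
        rfl }
  have h2 := X_reindex e (0 : Multiset (Sym2 (Fin t))) (fun v : Σ _ : Fin t, Fin 1 => w v.1)
  simp only [Multiset.map_zero] at h2
  rw [h2]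
  rfl

lemma pS_mul_pow (a t : ℕ) (ha : 0 < a) :
    pS a * pS 1 ^ t = X (0 : Multiset (Sym2 (Fin (t+1)))) (Fin.cons a (fun _ => 1)) := by
  rw [← prod_pS (t+1) (Fin.cons a (fun _ => 1)) (fun v => by
    refine Fin.cases ?_ ?_ v
    · rw [Fin.cons_zero]; exact ha
    · intro i; rw [Fin.cons_succ]; exact one_pos)]
  rw [Fin.prod_univ_succ, Fin.cons_zero]
  congr 1
  simp [Fin.cons_succ, Finset.prod_const]


lemma card_and_eq_sum {V : Type*} [Fintype V] {w : V → ℕ} (m : ℕ+ →₀ ℕ)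
    (Q : (V → ℕ+) → Prop) [Fintype {κ : V → ℕ+ // mon w κ = m}] :
    (Nat.card {κ : V → ℕ+ // Q κ ∧ mon w κ = m} : ℚ)
      = ∑ x : {κ : V → ℕ+ // mon w κ = m}, if Q x.1 then (1 : ℚ) else 0 := by
  have e : {κ : V → ℕ+ // Q κ ∧ mon w κ = m} ≃ {x : {κ : V → ℕ+ // mon w κ = m} // Q x.1} :=
    { toFun := fun k => ⟨⟨k.1, k.2.2⟩, k.2.1⟩
      invFun := fun x => ⟨x.1.1, x.2, x.1.2⟩
      left_inv := fun k => rfl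
      right_inv := fun x => rfl }
  rw [Nat.card_congr e, Nat.card_eq_fintype_card, Fintype.card_subtype, Finset.sum_boole]

lemma proper_star_iff (s : ℕ) (κ : Fin (s+1) → ℕ+) :
    Proper (starE (s+1)) κ ↔ ∀ i : Fin s, κ i.castSucc ≠ κ (Fin.last s) := by
  constructor
  · intro h i
    apply h
    rw [starE]
    apply Multiset.mem_map.2
    refine ⟨(i.castSucc, Fin.last s), ?_, rfl⟩
    rw [Finset.mem_val, Finset.mem_filter]
    refine ⟨Finset.mem_univ _, ?_, ?_⟩
    · rw [Fin.coe_castSucc]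
      omega
    · rw [Fin.val_last]
  · intro h u v huv
    rw [starE] at huv
    obtain ⟨p, hp, hpe⟩ := Multiset.mem_map.1 huv
    rw [Finset.mem_val, Finset.mem_filter] at hp
    obtain ⟨-, h1, h2⟩ := hp
    have hp2 : p.2 = Fin.last s := by
      apply Fin.ext
      rw [Fin.val_last]
      omega
    have hlt : (p.1 : ℕ) < s := by omega
    have hp1 : p.1 = (⟨(p.1 : ℕ), hlt⟩ : Fin s).castSucc := by
      apply Fin.ext
      simp
    rcases Sym2.eq_iff.1 hpe with ⟨e1, e2⟩ | ⟨e1, e2⟩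
    · rw [← e1, ← e2, hp1, hp2]
      exact h ⟨(p.1 : ℕ), hlt⟩
    · rw [← e1, ← e2, hp1, hp2]
      exact (h ⟨(p.1 : ℕ), hlt⟩).symm

lemma card_agree (s : ℕ) (m : ℕ+ →₀ ℕ) (T : Finset (Fin s)) :
    Nat.card {κ : Fin (s+1) → ℕ+ //
        (∀ i ∈ T, κ i.castSucc = κ (Fin.last s)) ∧ mon (fun _ => (1:ℕ)) κ = m}
      = Nat.card {κ : Fin ((s - T.card)+1) → ℕ+ //
          Proper (0 : Multiset (Sym2 (Fin ((s - T.card)+1)))) κ ∧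
          mon (Fin.cons (T.card + 1) (fun _ => 1)) κ = m} := by
  classical
  set t := s - T.card with ht
  have hTcard : T.card ≤ s := by
    have := Finset.card_le_univ T
    simpa using this
  have hcompl : (Tᶜ : Finset (Fin s)).card = t := by
    rw [Finset.card_compl]
    simp [ht]
  have ψ : {i // i ∈ (Tᶜ : Finset (Fin s))} ≃ Fin t :=
    Fintype.equivFinOfCardEq (by rw [Fintype.card_coe]; exact hcompl)
  have split : ∀ κ : Fin (s+1) → ℕ+, (∀ i ∈ T, κ i.castSucc = κ (Fin.last s)) →
      mon (fun _ => (1:ℕ)) κ = Finsupp.single (κ (Fin.last s)) (T.card + 1)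
        + ∑ y : {i // i ∈ (Tᶜ : Finset (Fin s))}, Finsupp.single (κ y.1.castSucc) 1 := by
    intro κ hag
    have h1 : mon (fun _ => (1:ℕ)) κ
        = (∑ i : Fin s, Finsupp.single (κ i.castSucc) 1) + Finsupp.single (κ (Fin.last s)) 1 := by
      simp only [mon]
      exact Fin.sum_univ_castSucc _
    have h2 : (∑ i : Fin s, Finsupp.single (κ i.castSucc) 1)
        = (∑ i ∈ T, Finsupp.single (κ i.castSucc) 1)
          + ∑ i ∈ Tᶜ, Finsupp.single (κ i.castSucc) 1 :=
      (Finset.sum_add_sum_compl T _).symm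
    have h3 : (∑ i ∈ T, Finsupp.single (κ i.castSucc) 1)
        = Finsupp.single (κ (Fin.last s)) T.card := by
      rw [Finset.sum_congr rfl (fun i hi => by rw [hag i hi])]
      rw [Finset.sum_const, Finsupp.smul_single, smul_eq_mul, mul_one]
    have h4 : (∑ i ∈ Tᶜ, Finsupp.single (κ i.castSucc) 1)
        = ∑ y : {i // i ∈ (Tᶜ : Finset (Fin s))}, Finsupp.single (κ y.1.castSucc) 1 :=
      (Finset.sum_coe_sort _ _).symm
    rw [h1, h2, h3, h4, Finsupp.single_add]
    abel
  have split2 : ∀ κ : Fin (t+1) → ℕ+, mon (Fin.cons (T.card+1) (fun _ => (1:ℕ))) κ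
      = Finsupp.single (κ 0) (T.card+1)
        + ∑ y : {i // i ∈ (Tᶜ : Finset (Fin s))}, Finsupp.single (κ (ψ y).succ) 1 := by
    intro κ
    simp only [mon]
    rw [Fin.sum_univ_succ, Fin.cons_zero]
    simp only [Fin.cons_succ]
    congr 1
    exact (Equiv.sum_comp ψ (fun r => Finsupp.single (κ r.succ) 1)).symm
  have e1 : {κ : Fin (s+1) → ℕ+ //
      (∀ i ∈ T, κ i.castSucc = κ (Fin.last s)) ∧ mon (fun _ => (1:ℕ)) κ = m}
      ≃ {p : ℕ+ × ({i // i ∈ (Tᶜ : Finset (Fin s))} → ℕ+) //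
          Finsupp.single p.1 (T.card + 1) + ∑ y, Finsupp.single (p.2 y) 1 = m} :=
    { toFun := fun x => ⟨(x.1 (Fin.last s), fun y => x.1 y.1.castSucc), by
        rw [← split x.1 x.2.1]
        exact x.2.2⟩
      invFun := fun p => ⟨Fin.lastCases p.1.1
          (fun i => if h : i ∈ (Tᶜ : Finset (Fin s)) then p.1.2 ⟨i, h⟩ else p.1.1), by
        have hag : ∀ i ∈ T, (Fin.lastCases p.1.1
            (fun i => if h : i ∈ (Tᶜ : Finset (Fin s)) then p.1.2 ⟨i, h⟩ else p.1.1) :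
              (i : Fin (s+1)) → ℕ+) i.castSucc
            = (Fin.lastCases p.1.1
            (fun i => if h : i ∈ (Tᶜ : Finset (Fin s)) then p.1.2 ⟨i, h⟩ else p.1.1) :
              (i : Fin (s+1)) → ℕ+) (Fin.last s) := by
          intro i hi
          have hnc : i ∉ (Tᶜ : Finset (Fin s)) := by simp [hi]
          simp only [Fin.lastCases_castSucc, Fin.lastCases_last, dif_neg hnc]
        refine ⟨hag, ?_⟩
        rw [split _ hag]
        simp only [Fin.lastCases_castSucc, Fin.lastCases_last]
        rw [Finset.sum_congr rfl (fun (y : {i // i ∈ (Tᶜ : Finset (Fin s))}) _ => by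
          rw [dif_pos y.2])]
        exact p.2⟩
      left_inv := by
        rintro ⟨κ, hag, hm⟩
        apply Subtype.ext
        funext v
        induction v using Fin.lastCases with
        | last => simp only [Fin.lastCases_last]
        | cast i =>
          simp only [Fin.lastCases_castSucc]
          by_cases hi : i ∈ (Tᶜ : Finset (Fin s))
          · rw [dif_pos hi]
          · rw [dif_neg hi]
            have hiT : i ∈ T := by simpa using hi
            exact (hag i hiT).symm
      right_inv := by
        rintro ⟨p, hp⟩
        apply Subtype.ext
        apply Prod.ext
        · simp only [Fin.lastCases_last]
        · funext y
          simp only [Fin.lastCases_castSucc, dif_pos y.2] }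
  have e2 : {κ : Fin (t+1) → ℕ+ //
      Proper (0 : Multiset (Sym2 (Fin (t+1)))) κ ∧
        mon (Fin.cons (T.card + 1) (fun _ => 1)) κ = m}
      ≃ {p : ℕ+ × ({i // i ∈ (Tᶜ : Finset (Fin s))} → ℕ+) //
          Finsupp.single p.1 (T.card + 1) + ∑ y, Finsupp.single (p.2 y) 1 = m} :=
    { toFun := fun x => ⟨(x.1 0, fun y => x.1 (ψ y).succ), by
        rw [← split2 x.1]
        exact x.2.2⟩
      invFun := fun p => ⟨Fin.cons p.1.1 (fun r => p.1.2 (ψ.symm r)), Proper_zero _, by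
        rw [split2]
        simp only [Fin.cons_zero, Fin.cons_succ, Equiv.symm_apply_apply]
        exact p.2⟩
      left_inv := by
        rintro ⟨κ, hP, hm⟩
        apply Subtype.ext
        funext v
        refine Fin.cases ?_ ?_ v
        · simp only [Fin.cons_zero]
        · intro r
          simp only [Fin.cons_succ, Equiv.apply_symm_apply]
      right_inv := by
        rintro ⟨p, hp⟩
        apply Subtype.ext
        apply Prod.ext
        · simp only [Fin.cons_zero]
        · funext y
          simp only [Fin.cons_succ, Equiv.symm_apply_apply] }
  exact (Nat.card_congr e1).trans (Nat.card_congr e2).symm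

lemma XS_expand (s : ℕ) :
    X (starE (s+1)) (fun _ => (1:ℕ)) =
      ∑ j ∈ Finset.range (s+1), (((-1:ℚ)^j) * (s.choose j : ℚ)) •
        (pS (j+1) * pS 1 ^ (s - j)) := by
  funext m
  have hco : (∑ j ∈ Finset.range (s+1), (((-1:ℚ)^j) * (s.choose j : ℚ)) •
      (pS (j+1) * pS 1 ^ (s - j))) m
      = ∑ j ∈ Finset.range (s+1), (((-1:ℚ)^j) * (s.choose j : ℚ)) *
        (Nat.card {κ : Fin ((s-j)+1) → ℕ+ // Proper (0 : Multiset (Sym2 (Fin ((s-j)+1)))) κ ∧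
          mon (Fin.cons (j+1) (fun _ => 1)) κ = m} : ℚ) := by
    have h1 : (∑ j ∈ Finset.range (s+1), (((-1:ℚ)^j) * (s.choose j : ℚ)) •
        (pS (j+1) * pS 1 ^ (s - j))) m
        = ∑ j ∈ Finset.range (s+1), ((((-1:ℚ)^j) * (s.choose j : ℚ)) •
          (pS (j+1) * pS 1 ^ (s - j))) m := by
      exact
        map_sum (MvPowerSeries.coeff m)
          (fun j => (((-1:ℚ)^j) * (s.choose j : ℚ)) • (pS (j+1) * pS 1 ^ (s - j)))
          (Finset.range (s+1))
    rw [h1]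
    apply Finset.sum_congr rfl
    intro j _
    rw [pS_mul_pow (j+1) (s-j) (Nat.succ_pos j)]
    rfl
  show (Nat.card {κ : Fin (s+1) → ℕ+ //
      Proper (starE (s+1)) κ ∧ mon (fun _ => (1:ℕ)) κ = m} : ℚ) = _
  rw [hco]
  haveI hK : Finite {κ : Fin (s+1) → ℕ+ // mon (fun _ => (1:ℕ)) κ = m} :=
    finite_mon (fun _ => one_pos) m
  letI : Fintype {κ : Fin (s+1) → ℕ+ // mon (fun _ => (1:ℕ)) κ = m} := Fintype.ofFinite _
  rw [card_and_eq_sum m (Proper (starE (s+1)))]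
  have step1 : ∀ x : {κ : Fin (s+1) → ℕ+ // mon (fun _ => (1:ℕ)) κ = m},
      (if Proper (starE (s+1)) x.1 then (1:ℚ) else 0)
      = ∑ T ∈ (Finset.univ : Finset (Fin s)).powerset,
          ((-1:ℚ)^T.card) * (if (∀ i ∈ T, x.1 i.castSucc = x.1 (Fin.last s)) then 1 else 0) := by
    intro x
    classical
    set B := Finset.univ.filter (fun i : Fin s => x.1 i.castSucc = x.1 (Fin.last s)) with hB
    have hsub : ∀ T : Finset (Fin s),
        ((∀ i ∈ T, x.1 i.castSucc = x.1 (Fin.last s)) ↔ T ⊆ B) := by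
      intro T
      constructor
      · intro h i hi
        rw [hB, Finset.mem_filter]
        exact ⟨Finset.mem_univ _, h i hi⟩
      · intro h i hi
        have hh := h hi
        rw [hB, Finset.mem_filter] at hh
        exact hh.2
    have h2 : ∑ T ∈ (Finset.univ : Finset (Fin s)).powerset,
        ((-1:ℚ)^T.card) * (if (∀ i ∈ T, x.1 i.castSucc = x.1 (Fin.last s)) then 1 else 0)
        = ∑ T ∈ (Finset.univ : Finset (Fin s)).powerset,
          (if T ⊆ B then ((-1:ℚ)^T.card) else 0) := by
      apply Finset.sum_congr rfl
      intro T _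
      by_cases hT : T ⊆ B
      · rw [if_pos ((hsub T).2 hT), if_pos hT, mul_one]
      · rw [if_neg (fun hh => hT ((hsub T).1 hh)), if_neg hT, mul_zero]
    have h3 : ((Finset.univ : Finset (Fin s)).powerset.filter
        (fun T : Finset (Fin s) => T ⊆ B)) = B.powerset := by
      ext T
      simp [Finset.mem_powerset, Finset.subset_univ]
    have h4 : (∑ T ∈ B.powerset, (-1:ℚ)^T.card) = if B = ∅ then 1 else 0 := by
      have h5 := Finset.sum_powerset_neg_one_pow_card (x := B)
      have h6 : ((∑ T ∈ B.powerset, (-1:ℤ)^T.card : ℤ) : ℚ)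
          = ∑ T ∈ B.powerset, (-1:ℚ)^T.card := by
        push_cast; rfl
      rw [← h6, h5]
      split <;> norm_num
    have h7 : Proper (starE (s+1)) x.1 ↔ B = ∅ := by
      rw [proper_star_iff, hB, Finset.filter_eq_empty_iff]
      constructor
      · intro h i _; exact h i
      · intro h i; exact h (Finset.mem_univ i)
    rw [h2, ← Finset.sum_filter, h3, h4]
    exact if_congr h7 rfl rfl
  have hswap : ∑ x : {κ : Fin (s+1) → ℕ+ // mon (fun _ => (1:ℕ)) κ = m},
      (if Proper (starE (s+1)) x.1 then (1:ℚ) else 0)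
      = ∑ T ∈ (Finset.univ : Finset (Fin s)).powerset,
          ∑ x : {κ : Fin (s+1) → ℕ+ // mon (fun _ => (1:ℕ)) κ = m},
            ((-1:ℚ)^T.card) * (if (∀ i ∈ T, x.1 i.castSucc = x.1 (Fin.last s)) then 1 else 0) := by
    rw [Finset.sum_congr rfl (fun x _ => step1 x)]
    exact Finset.sum_comm
  rw [hswap]
  have step2 : ∀ T ∈ (Finset.univ : Finset (Fin s)).powerset,
      (∑ x : {κ : Fin (s+1) → ℕ+ // mon (fun _ => (1:ℕ)) κ = m},
        ((-1:ℚ)^T.card) * (if (∀ i ∈ T, x.1 i.castSucc = x.1 (Fin.last s)) then 1 else 0))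
      = ((-1:ℚ)^T.card) * (Nat.card {κ : Fin ((s - T.card)+1) → ℕ+ //
          Proper (0 : Multiset (Sym2 (Fin ((s - T.card)+1)))) κ ∧
          mon (Fin.cons (T.card + 1) (fun _ => 1)) κ = m} : ℚ) := by
    intro T _
    rw [← Finset.mul_sum]
    congr 1
    have hc := card_and_eq_sum (w := fun _ => (1:ℕ)) m
      (fun κ : Fin (s+1) → ℕ+ => ∀ i ∈ T, κ i.castSucc = κ (Fin.last s))
    rw [card_agree s m T] at hc
    refine Eq.trans ?_ hc.symm
    exact Finset.sum_congr rfl fun x _ => by congr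
  rw [Finset.sum_congr rfl step2]
  have hgroup := Finset.sum_powerset_apply_card
    (fun j => ((-1:ℚ)^j) * (Nat.card {κ : Fin ((s - j)+1) → ℕ+ //
        Proper (0 : Multiset (Sym2 (Fin ((s - j)+1)))) κ ∧
        mon (Fin.cons (j + 1) (fun _ => 1)) κ = m} : ℚ))
    (x := (Finset.univ : Finset (Fin s)))
  rw [hgroup]
  simp only [Finset.card_univ, Fintype.card_fin]
  apply Finset.sum_congr rfl
  intro j _
  rw [nsmul_eq_mul]
  ring

lemma delta_sum (sN i : ℕ) (hi : i ≤ sN) :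
    (∑ j ∈ Finset.Icc i sN, ((-1:ℚ)^j * (sN.choose j : ℚ)) * ((-1:ℚ)^i * ((j.choose i : ℕ) : ℚ)))
      = if i = sN then 1 else 0 := by
  have h1 : ∀ j ∈ Finset.Icc i sN,
      ((-1:ℚ)^j * (sN.choose j : ℚ)) * ((-1:ℚ)^i * ((j.choose i : ℕ) : ℚ))
      = (sN.choose i : ℚ) * ((-1:ℚ)^j * (-1:ℚ)^i * (((sN - i).choose (j - i) : ℕ) : ℚ)) := by
    intro j hj
    rw [Finset.mem_Icc] at hj
    have hcc := Nat.choose_mul (n := sN) hj.1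
    have hc : (sN.choose j : ℚ) * ((j.choose i : ℕ) : ℚ)
        = (sN.choose i : ℚ) * (((sN - i).choose (j - i) : ℕ) : ℚ) := by
      exact_mod_cast congrArg (Nat.cast (R := ℚ)) hcc
    calc ((-1:ℚ)^j * (sN.choose j : ℚ)) * ((-1:ℚ)^i * ((j.choose i : ℕ) : ℚ))
        = ((-1:ℚ)^j * (-1:ℚ)^i) * ((sN.choose j : ℚ) * ((j.choose i : ℕ) : ℚ)) := by ring
      _ = ((-1:ℚ)^j * (-1:ℚ)^i) * ((sN.choose i : ℚ) * (((sN - i).choose (j - i) : ℕ) : ℚ)) := by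
          rw [hc]
      _ = (sN.choose i : ℚ) * ((-1:ℚ)^j * (-1:ℚ)^i * (((sN - i).choose (j - i) : ℕ) : ℚ)) := by
          ring
  rw [Finset.sum_congr rfl h1, ← Finset.mul_sum]
  rw [← Finset.Ico_add_one_right_eq_Icc, Finset.sum_Ico_eq_sum_range]
  have h2 : ∀ tt : ℕ, (-1:ℚ)^(i+tt) * (-1:ℚ)^i * (((sN - i).choose ((i+tt) - i) : ℕ) : ℚ)
      = (-1:ℚ)^tt * (((sN - i).choose tt : ℕ) : ℚ) := by
    intro tt
    rw [Nat.add_sub_cancel_left]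
    have hsq : (-1:ℚ)^i * (-1:ℚ)^i = 1 := by
      rw [← pow_add]
      exact Even.neg_one_pow ⟨i, rfl⟩
    calc (-1:ℚ)^(i+tt) * (-1:ℚ)^i * (((sN - i).choose tt : ℕ) : ℚ)
        = ((-1:ℚ)^i * (-1:ℚ)^i) * ((-1:ℚ)^tt * (((sN - i).choose tt : ℕ) : ℚ)) := by
          rw [pow_add]; ring
      _ = (-1:ℚ)^tt * (((sN - i).choose tt : ℕ) : ℚ) := by rw [hsq, one_mul]
  rw [Finset.sum_congr rfl (fun tt _ => h2 tt)]
  have h3 : sN + 1 - i = (sN - i) + 1 := by omega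
  rw [h3]
  have h4 : (∑ tt ∈ Finset.range ((sN - i) + 1), (-1:ℚ)^tt * (((sN - i).choose tt : ℕ) : ℚ))
      = if sN - i = 0 then 1 else 0 := by
    have h5 := Int.alternating_sum_range_choose (n := sN - i)
    have h6 : ((∑ tt ∈ Finset.range ((sN - i) + 1), ((-1:ℤ)^tt * ((sN - i).choose tt : ℤ)) : ℤ) : ℚ)
        = ∑ tt ∈ Finset.range ((sN - i) + 1), (-1:ℚ)^tt * (((sN - i).choose tt : ℕ) : ℚ) := by
      push_cast; rfl
    rw [← h6, h5]
    split <;> norm_num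
  rw [h4]
  by_cases hieq : i = sN
  · subst hieq
    simp
  · have hne : ¬ (sN - i = 0) := by omega
    rw [if_neg hne, if_neg hieq, mul_zero]

lemma pS_expand (s : ℕ) :
    pS (s+1) = ∑ j ∈ Finset.range (s+1), (((-1:ℚ)^j) * (s.choose j : ℚ)) •
      (X (starE (j+1)) (fun _ => (1:ℕ)) * pS 1 ^ (s - j)) := by
  have hsub : ∀ j ∈ Finset.range (s+1),
      (((-1:ℚ)^j) * (s.choose j : ℚ)) • (X (starE (j+1)) (fun _ => (1:ℕ)) * pS 1 ^ (s - j))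
      = ∑ i ∈ Finset.range (j+1),
          ((((-1:ℚ)^j) * (s.choose j : ℚ)) * (((-1:ℚ)^i) * (j.choose i : ℚ))) •
            (pS (i+1) * pS 1 ^ (s - i)) := by
    intro j hj
    rw [Finset.mem_range] at hj
    rw [XS_expand j, Finset.sum_mul, Finset.smul_sum]
    apply Finset.sum_congr rfl
    intro i hi
    rw [Finset.mem_range] at hi
    rw [smul_mul_assoc, smul_smul]
    congr 1
    rw [mul_assoc, ← pow_add]
    congr 2
    omega
  rw [Finset.sum_congr rfl hsub]
  have hcomm : ∀ (j : ℕ) (i : ℕ), j ∈ Finset.range (s+1) ∧ i ∈ Finset.range (j+1)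
      ↔ j ∈ Finset.Icc i s ∧ i ∈ Finset.range (s+1) := by
    intro j i
    simp only [Finset.mem_range, Finset.mem_Icc]
    omega
  rw [Finset.sum_comm' hcomm]
  have hinner : ∀ i ∈ Finset.range (s+1),
      (∑ j ∈ Finset.Icc i s,
        ((((-1:ℚ)^j) * (s.choose j : ℚ)) * (((-1:ℚ)^i) * (j.choose i : ℚ))) •
          (pS (i+1) * pS 1 ^ (s - i)))
      = (if i = s then (1:ℚ) else 0) • (pS (i+1) * pS 1 ^ (s - i)) := by
    intro i hi
    rw [Finset.mem_range] at hi
    rw [← Finset.sum_smul, delta_sum s i (by omega)]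
  rw [Finset.sum_congr rfl hinner]
  simp only [ite_smul, one_smul, zero_smul]
  rw [Finset.sum_ite_eq' (Finset.range (s+1)) s (fun i => pS (i+1) * pS 1 ^ (s - i))]
  rw [if_pos (Finset.mem_range.2 (Nat.lt_succ_self s))]
  rw [Nat.sub_self, pow_zero, mul_one]

lemma list_range_sum {M : Type*} [AddCommMonoid M] (n : ℕ) (f : ℕ → M) :
    ((List.range n).map f).sum = ∑ j ∈ Finset.range n, f j := by
  induction n with
  | zero => simp
  | succ n ih =>
    rw [List.range_succ, List.map_append, List.sum_append, Finset.sum_range_succ, ih]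
    simp

lemma list_sum_map_flatMap {α β M : Type*} [AddCommMonoid M] (xs : List α) (g : α → List β)
    (F : β → M) :
    ((xs.flatMap g).map F).sum = (xs.map (fun x => ((g x).map F).sum)).sum := by
  induction xs with
  | nil => simp
  | cons a t ih => simp [List.flatMap_cons, ih]

lemma mem_boundedLists {l α : List ℕ} (h : α ∈ boundedLists l) :
    List.Forall₂ (fun n b => 1 ≤ b ∧ b ≤ n) l α := by
  induction l generalizing α with
  | nil =>
    simp only [boundedLists, List.mem_singleton] at h
    subst h
    exact List.Forall₂.nil
  | cons a t ih =>
    simp only [boundedLists, List.mem_flatMap, List.mem_map, List.mem_range] at h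
    obtain ⟨j, hj, r, hr, rfl⟩ := h
    exact List.Forall₂.cons ⟨by omega, by omega⟩ (ih hr)

lemma forall2_sum_bounds : ∀ {l α : List ℕ},
    List.Forall₂ (fun n b => 1 ≤ b ∧ b ≤ n) l α →
    l.length ≤ α.sum ∧ α.sum ≤ l.sum := by
  intro l α h
  induction h with
  | nil => simp
  | cons hab hrest ih =>
    simp only [List.sum_cons, List.length_cons]
    omega

lemma smul_mul_smul_q (c d : ℚ) (A B : MvPowerSeries ℕ+ ℚ) :
    (c • A) * (d • B) = (c * d) • (A * B) := by
  rw [smul_mul_assoc, mul_smul_comm, smul_smul]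

lemma prod_expand (Z H : ℕ → MvPowerSeries ℕ+ ℚ) (x : MvPowerSeries ℕ+ ℚ)
    (hHZ : ∀ N : ℕ, H (N+1) = ∑ j ∈ Finset.range (N+1),
      (((-1:ℚ)^j) * (N.choose j : ℚ)) • (Z (j+1) * x ^ (N - j))) :
    ∀ l : List ℕ, (∀ a ∈ l, 0 < a) →
      (l.map H).prod = ((boundedLists l).map fun α =>
        (((-1 : ℚ) ^ (α.sum - l.length)) *
          ((List.zipWith (fun a b => Nat.choose (a - 1) (b - 1)) l α).prod : ℚ)) •
        ((α.map Z).prod * x ^ (l.sum - α.sum))).sum := by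
  intro l
  induction l with
  | nil =>
    intro _
    simp [boundedLists]
  | cons a l ih =>
    intro hpos
    obtain ⟨N, rfl⟩ : ∃ N, a = N + 1 :=
      ⟨a - 1, by have := hpos a List.mem_cons_self; omega⟩
    have hl : ∀ b ∈ l, 0 < b := fun b hb => hpos b (List.mem_cons_of_mem _ hb)
    rw [List.map_cons, List.prod_cons, ih hl, hHZ N]
    have hbl : boundedLists ((N+1) :: l)
        = (List.range (N+1)).flatMap (fun j => (boundedLists l).map (fun r => (j+1) :: r)) := rfl
    rw [hbl, list_sum_map_flatMap]
    simp only [List.map_map]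
    have hterm : ∀ j ∈ List.range (N+1), ∀ α' ∈ boundedLists l,
        ((((-1 : ℚ) ^ (((j+1) :: α').sum - ((N+1) :: l).length)) *
          ((List.zipWith (fun a b => Nat.choose (a - 1) (b - 1)) ((N+1) :: l)
            ((j+1) :: α')).prod : ℚ)) •
          ((((j+1) :: α').map Z).prod * x ^ (((N+1) :: l).sum - ((j+1) :: α').sum)))
        = ((((-1:ℚ)^j) * (N.choose j : ℚ)) • (Z (j+1) * x ^ (N - j))) *
          ((((-1 : ℚ) ^ (α'.sum - l.length)) *
            ((List.zipWith (fun a b => Nat.choose (a - 1) (b - 1)) l α').prod : ℚ)) •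
          ((α'.map Z).prod * x ^ (l.sum - α'.sum))) := by
      intro j hj α' hα'
      have hjN : j < N + 1 := List.mem_range.1 hj
      have h2 := mem_boundedLists hα'
      have hlen : l.length = α'.length := List.Forall₂.length_eq h2
      have hs := forall2_sum_bounds h2
      rw [smul_mul_smul_q]
      simp only [List.sum_cons, List.length_cons, List.zipWith_cons_cons, List.map_cons,
        List.prod_cons]
      have e1 : (j+1) + α'.sum - (l.length + 1) = j + (α'.sum - l.length) := by omega
      have e2 : (N+1) + l.sum - ((j+1) + α'.sum) = (N - j) + (l.sum - α'.sum) := by omega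
      rw [e1, e2, pow_add, pow_add]
      have e3 : (N + 1 - 1).choose (j + 1 - 1) = N.choose j := by
        simp
      rw [e3]
      push_cast
      congr 1
      · ring
      · ring
    rw [← list_range_sum, ← List.sum_map_mul_right]
    congr 1
    apply List.map_congr_left
    intro j hj
    rw [← List.sum_map_mul_left]
    congr 1
    apply List.map_congr_left
    intro α' hα'
    exact (hterm j hj α' hα').symm


lemma XStars_eq_prod (l : List ℕ) :
    XStars l = (l.map (fun n => X (starE n) (fun _ => (1:ℕ)))).prod := by
  have h1 : XStars l = ∏ i : Fin l.length, X (starE (l.get i)) (fun _ => (1:ℕ)) := by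
    simp only [XStars]
    exact Xunion_eq_prod l.length (fun i => l.get i) (fun i => starE (l.get i))
      (fun _ _ => 1) (fun _ _ => one_pos)
  rw [h1, ← List.ofFn_getElem_eq_map, List.prod_ofFn]
  rfl

lemma map_prod_append (f : ℕ → MvPowerSeries ℕ+ ℚ) (α : List ℕ) (Mn : ℕ) :
    ((sortDesc α ++ List.replicate Mn 1).map f).prod = (α.map f).prod * (f 1)^Mn := by
  rw [List.map_append, List.prod_append, List.map_replicate, List.prod_replicate]
  congr 1
  simp only [sortDesc]
  exact List.Perm.prod_eq (List.Perm.map f (List.perm_insertionSort (· ≥ ·) α))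

lemma XS_one : X (starE 1) (fun _ => (1:ℕ)) = pS 1 := by
  have h := XS_expand 0
  simpa using h

end MainProof

/-- **Proposition.** For every partition `λ`:
`p_λ = ∑_{α ⊆ λ} (-1)^{|α| - ℓ(λ)} ∏_i C(λ_i - 1, α_i - 1) · X_{S_{α̃·(1^{|λ|-|α|})}}` and
`X_{S_λ} = ∑_{α ⊆ λ} (-1)^{|α| - ℓ(λ)} ∏_i C(λ_i - 1, α_i - 1) · p_{α̃·(1^{|λ|-|α|})}`,
where `α ⊆ λ` means `ℓ(α) = ℓ(λ)` and `α_i ≤ λ_i` for all `i`. -/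
theorem star_basis_power_sum_expansions
    (l : List ℕ) (hsort : l.Pairwise (· ≥ ·)) (hpos : ∀ x ∈ l, 0 < x) :
    pProd l =
      ((boundedLists l).map fun α =>
        (((-1 : ℚ) ^ (α.sum - l.length)) *
          ((List.zipWith (fun a b => Nat.choose (a - 1) (b - 1)) l α).prod : ℚ)) •
        XStars (sortDesc α ++ List.replicate (l.sum - α.sum) 1)).sum ∧
    XStars l =
      ((boundedLists l).map fun α =>
        (((-1 : ℚ) ^ (α.sum - l.length)) *
          ((List.zipWith (fun a b => Nat.choose (a - 1) (b - 1)) l α).prod : ℚ)) •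
        pProd (sortDesc α ++ List.replicate (l.sum - α.sum) 1)).sum := by
  constructor
  · have hmain := prod_expand (fun n => X (starE n) (fun _ => (1:ℕ))) pS (pS 1)
      (fun N => pS_expand N) l hpos
    rw [show pProd l = (l.map pS).prod from rfl, hmain]
    apply congrArg List.sum
    apply List.map_congr_left
    intro α _
    congr 1
    rw [XStars_eq_prod, map_prod_append, XS_one]
  · have hmain := prod_expand pS (fun n => X (starE n) (fun _ => (1:ℕ))) (pS 1)
      (fun N => XS_expand N) l hpos
    rw [XStars_eq_prod l, hmain]
    apply congrArg List.sum
    apply List.map_congr_left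
    intro α _
    congr 1
    rw [show pProd (sortDesc α ++ List.replicate (l.sum - α.sum) 1)
        = ((sortDesc α ++ List.replicate (l.sum - α.sum) 1).map pS).prod from rfl,
      map_prod_append]

end CSF
end

section
/- For any two nonempty compositions α and β, the extended chromatic symmetric functions of weighted paths satisfy the multiplication rule X_{(P_{ℓ(α)},α)} · X_{(P_{ℓ(β)},β)} = X_{(P_{ℓ(α·β)},α·β)} + X_{(P_{ℓ(α⊙β)},α⊙β)}. -/
open scoped BigOperators
open scoped Classical

namespace CSF

/-! ## auxiliary -/

noncomputable def monN (w : ℕ → ℕ) (k : ℕ) (κ : ℕ → ℕ+) : ℕ+ →₀ ℕ :=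
  ∑ i ∈ Finset.range k, Finsupp.single (κ i) (w i)

def Ok (w : ℕ → ℕ) (k : ℕ) (m : ℕ+ →₀ ℕ) (κ : ℕ → ℕ+) : Prop :=
  (∀ i, k ≤ i → κ i = 1) ∧ (∀ i, i + 1 < k → κ i ≠ κ (i + 1)) ∧ monN w k κ = m

lemma monN_congr {w w' : ℕ → ℕ} {k : ℕ} {κ κ' : ℕ → ℕ+}
    (hw : ∀ i < k, w i = w' i) (hκ : ∀ i < k, κ i = κ' i) :
    monN w k κ = monN w' k κ' := by
  unfold monN
  refine Finset.sum_congr rfl fun i hi => ?_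
  rw [hw i (Finset.mem_range.mp hi), hκ i (Finset.mem_range.mp hi)]

lemma ok_congr_w {w w' : ℕ → ℕ} {k : ℕ} {m : ℕ+ →₀ ℕ} {κ : ℕ → ℕ+}
    (hw : ∀ i < k, w i = w' i) : Ok w k m κ ↔ Ok w' k m κ := by
  unfold Ok
  rw [monN_congr hw (fun _ _ => rfl)]

lemma mem_pathE_iff {k : ℕ} {u v : Fin k} :
    s(u, v) ∈ pathE k ↔ ((u : ℕ) + 1 = (v : ℕ) ∨ (v : ℕ) + 1 = (u : ℕ)) := by
  unfold pathE
  simp only [Multiset.mem_map, Finset.mem_val, Finset.mem_filter, Finset.mem_univ, true_and]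
  constructor
  · rintro ⟨⟨a, b⟩, hab, he⟩
    rcases Sym2.eq_iff.mp he with ⟨h1, h2⟩ | ⟨h1, h2⟩
    · subst h1; subst h2; exact Or.inl hab
    · subst h1; subst h2; exact Or.inr hab
  · rintro (h | h)
    · exact ⟨(u, v), h, rfl⟩
    · exact ⟨(v, u), h, Sym2.eq_swap⟩

lemma proper_pathE_iff {k : ℕ} (κ : Fin k → ℕ+) :
    Proper (pathE k) κ ↔ ∀ u v : Fin k, (u : ℕ) + 1 = (v : ℕ) → κ u ≠ κ v := by
  constructor
  · intro h u v huv
    exact h u v (mem_pathE_iff.mpr (Or.inl huv))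
  · intro h u v hm
    rcases mem_pathE_iff.mp hm with h1 | h1
    · exact h u v h1
    · exact (h v u h1).symm

/-- Coefficients of `X (pathE k)` count `Ok` colourings. -/
lemma X_path_eq (w : ℕ → ℕ) (k : ℕ) (m : ℕ+ →₀ ℕ) :
    X (pathE k) (fun i : Fin k => w i) m = (Nat.card {κ : ℕ → ℕ+ // Ok w k m κ} : ℚ) := by
  unfold X
  norm_num
  apply Nat.card_congr
  refine ⟨fun t => ⟨fun i => if h : i < k then t.1 ⟨i, h⟩ else 1, ?_, ?_, ?_⟩,
          fun t => ⟨fun i => t.1 i, ?_, ?_⟩, ?_, ?_⟩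
  · intro i hi
    exact dif_neg (by omega)
  · intro i hi
    dsimp only
    rw [dif_pos (by omega : i < k), dif_pos hi]
    exact (proper_pathE_iff t.1).mp t.2.1 ⟨i, by omega⟩ ⟨i + 1, hi⟩ rfl
  · refine Eq.trans ?_ t.2.2
    unfold monN mon
    rw [← Fin.sum_univ_eq_sum_range (fun i => Finsupp.single (if h : i < k then t.1 ⟨i, h⟩ else 1) (w i)) k]
    refine Finset.sum_congr rfl fun i _ => ?_
    rw [dif_pos i.isLt]
  · rw [proper_pathE_iff]
    intro u v huv
    have := t.2.2.1 u (by omega : (u : ℕ) + 1 < k)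
    simpa [huv] using this
  · refine Eq.trans ?_ t.2.2.2
    unfold monN mon
    rw [← Fin.sum_univ_eq_sum_range (fun i => Finsupp.single (t.1 i) (w i)) k]
  · intro t
    apply Subtype.ext
    funext i
    simp only [dif_pos i.isLt]
  · intro t
    apply Subtype.ext
    funext i
    by_cases h : i < k
    · simp only [dif_pos h]
    · simp only [dif_neg h]
      exact (t.2.1 i (by omega)).symm

lemma ok_support {w : ℕ → ℕ} {k : ℕ} {m : ℕ+ →₀ ℕ} {κ : ℕ → ℕ+} (hk : Ok w k m κ)
    {m' : ℕ+ →₀ ℕ} (hm : ∀ x, m x ≤ m' x)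
    (hw : ∀ i < k, 0 < w i) {i : ℕ} (hi : i < k) : κ i ∈ m'.support := by
  rw [Finsupp.mem_support_iff]
  have h1 : monN w k κ (κ i) = m (κ i) := by rw [hk.2.2]
  have h2 : monN w k κ (κ i) = ∑ j ∈ Finset.range k, Finsupp.single (κ j) (w j) (κ i) := by
    unfold monN; rw [Finsupp.finset_sum_apply]
  have h3 : Finsupp.single (κ i) (w i) (κ i) ≤ ∑ j ∈ Finset.range k, Finsupp.single (κ j) (w j) (κ i) :=
    Finset.single_le_sum (f := fun j => Finsupp.single (κ j) (w j) (κ i))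
      (fun j _ => Nat.zero_le _) (Finset.mem_range.mpr hi)
  rw [Finsupp.single_eq_same] at h3
  have := hw i hi
  have := hm (κ i)
  omega

lemma ok_finite (w : ℕ → ℕ) (k : ℕ) (m : ℕ+ →₀ ℕ) (hw : ∀ i < k, 0 < w i) :
    Finite {κ : ℕ → ℕ+ // Ok w k m κ} := by
  apply Finite.of_injective
    (f := fun t : {κ : ℕ → ℕ+ // Ok w k m κ} =>
      (fun i : Fin k => (⟨t.1 i, ok_support t.2 (fun x => le_refl _) hw i.isLt⟩ :
        {x : ℕ+ // x ∈ m.support})))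
  intro t1 t2 h
  apply Subtype.ext
  funext i
  by_cases hi : i < k
  · have := congrFun h ⟨i, hi⟩
    simpa using congrArg Subtype.val this
  · rw [t1.2.1 i (by omega), t2.2.1 i (by omega)]

/-! ## pairs -/

def Ok2 (w1 w2 : ℕ → ℕ) (n p : ℕ) (m : ℕ+ →₀ ℕ) (κ : (ℕ → ℕ+) × (ℕ → ℕ+)) : Prop :=
  Ok w1 n (monN w1 n κ.1) κ.1 ∧ Ok w2 p (monN w2 p κ.2) κ.2 ∧
    monN w1 n κ.1 + monN w2 p κ.2 = m

lemma ok2_finite (w1 w2 : ℕ → ℕ) (n p : ℕ) (m : ℕ+ →₀ ℕ)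
    (hw1 : ∀ i < n, 0 < w1 i) (hw2 : ∀ i < p, 0 < w2 i) :
    Finite {κ : (ℕ → ℕ+) × (ℕ → ℕ+) // Ok2 w1 w2 n p m κ} := by
  have key : ∀ (t : {κ : (ℕ → ℕ+) × (ℕ → ℕ+) // Ok2 w1 w2 n p m κ}),
      (∀ i : Fin n, t.1.1 i ∈ m.support) ∧ (∀ j : Fin p, t.1.2 j ∈ m.support) := by
    intro t
    have hsum := t.2.2.2
    have hle : ∀ x, monN w1 n t.1.1 x + monN w2 p t.1.2 x = m x := by
      intro x
      rw [← Finsupp.add_apply, hsum]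
    have hle1 : ∀ x, monN w1 n t.1.1 x ≤ m x := fun x => by have := hle x; omega
    have hle2 : ∀ x, monN w2 p t.1.2 x ≤ m x := fun x => by have := hle x; omega
    exact ⟨fun i => ok_support t.2.1 hle1 hw1 i.isLt,
           fun j => ok_support t.2.2.1 hle2 hw2 j.isLt⟩
  apply Finite.of_injective
    (f := fun t : {κ : (ℕ → ℕ+) × (ℕ → ℕ+) // Ok2 w1 w2 n p m κ} =>
      ((fun i : Fin n => (⟨t.1.1 i, (key t).1 i⟩ : {x : ℕ+ // x ∈ m.support})),
       (fun j : Fin p => (⟨t.1.2 j, (key t).2 j⟩ : {x : ℕ+ // x ∈ m.support}))))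
  intro t1 t2 h
  have h1 := congrArg Prod.fst h
  have h2 := congrArg Prod.snd h
  apply Subtype.ext
  have e1 : t1.1.1 = t2.1.1 := by
    funext i
    by_cases hi : i < n
    · simpa using congrArg Subtype.val (congrFun h1 ⟨i, hi⟩)
    · rw [t1.2.1.1 i (by omega), t2.2.1.1 i (by omega)]
  have e2 : t1.1.2 = t2.1.2 := by
    funext j
    by_cases hj : j < p
    · simpa using congrArg Subtype.val (congrFun h2 ⟨j, hj⟩)
    · rw [t1.2.2.1.1 j (by omega), t2.2.2.1.1 j (by omega)]
  exact Prod.ext e1 e2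

/-- Step B: the pair count decomposes over the antidiagonal. -/
lemma card_T (w1 w2 : ℕ → ℕ) (n p : ℕ) (m : ℕ+ →₀ ℕ)
    (hw1 : ∀ i < n, 0 < w1 i) (hw2 : ∀ i < p, 0 < w2 i) :
    (Nat.card {κ : (ℕ → ℕ+) × (ℕ → ℕ+) // Ok2 w1 w2 n p m κ} : ℚ) =
      ∑ q ∈ Finset.HasAntidiagonal.antidiagonal m,
        (Nat.card {κ : ℕ → ℕ+ // Ok w1 n q.1 κ} : ℚ) *
          (Nat.card {κ : ℕ → ℕ+ // Ok w2 p q.2 κ} : ℚ) := by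
  classical
  set T := {κ : (ℕ → ℕ+) × (ℕ → ℕ+) // Ok2 w1 w2 n p m κ}
  let f : T → ↥(Finset.HasAntidiagonal.antidiagonal m) := fun t =>
    ⟨(monN w1 n t.1.1, monN w2 p t.1.2), Finset.HasAntidiagonal.mem_antidiagonal.mpr t.2.2.2⟩
  have e1 : T ≃ Σ q : ↥(Finset.HasAntidiagonal.antidiagonal m), {t : T // f t = q} :=
    (Equiv.sigmaFiberEquiv f).symm
  have e2 : ∀ q : ↥(Finset.HasAntidiagonal.antidiagonal m), {t : T // f t = q} ≃
      ({κ : ℕ → ℕ+ // Ok w1 n q.1.1 κ} × {κ : ℕ → ℕ+ // Ok w2 p q.1.2 κ}) := by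
    intro q
    refine ⟨fun t => (⟨t.1.1.1, ?_⟩, ⟨t.1.1.2, ?_⟩), fun x =>
      ⟨⟨(x.1.1, x.2.1), ?_, ?_, ?_⟩, ?_⟩, ?_, ?_⟩
    · have hq : monN w1 n t.1.1.1 = q.1.1 := congrArg Prod.fst (congrArg Subtype.val t.2)
      rw [← hq]; exact t.1.2.1
    · have hq : monN w2 p t.1.1.2 = q.1.2 := congrArg Prod.snd (congrArg Subtype.val t.2)
      rw [← hq]; exact t.1.2.2.1
    · have := x.1.2
      rw [Ok] at this ⊢
      dsimp only
      exact ⟨this.1, this.2.1, rfl⟩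
    · have := x.2.2
      rw [Ok] at this ⊢
      dsimp only
      exact ⟨this.1, this.2.1, rfl⟩
    · rw [x.1.2.2.2, x.2.2.2.2]
      exact Finset.HasAntidiagonal.mem_antidiagonal.mp q.2
    · apply Subtype.ext
      dsimp only [f]
      exact Prod.ext x.1.2.2.2 x.2.2.2.2
    · intro t
      apply Subtype.ext
      apply Subtype.ext
      rfl
    · intro x
      rfl
  haveI : ∀ q : ↥(Finset.HasAntidiagonal.antidiagonal m), Finite {t : T // f t = q} := by
    intro q
    haveI := ok_finite w1 n q.1.1 hw1
    haveI := ok_finite w2 p q.1.2 hw2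
    exact Finite.of_equiv _ (e2 q).symm
  haveI : ∀ q : ↥(Finset.HasAntidiagonal.antidiagonal m), Fintype {t : T // f t = q} :=
    fun q => Fintype.ofFinite _
  have hc : Nat.card T = ∑ q : ↥(Finset.HasAntidiagonal.antidiagonal m), Nat.card {t : T // f t = q} := by
    rw [Nat.card_congr e1, Nat.card_eq_fintype_card, Fintype.card_sigma]
    refine Finset.sum_congr rfl fun q _ => ?_
    rw [Nat.card_eq_fintype_card]
  rw [hc]
  push_cast
  rw [← Finset.sum_coe_sort (Finset.HasAntidiagonal.antidiagonal m)
    (fun q => (Nat.card {κ : ℕ → ℕ+ // Ok w1 n q.1 κ} : ℚ) *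
          (Nat.card {κ : ℕ → ℕ+ // Ok w2 p q.2 κ} : ℚ))]
  refine Finset.sum_congr rfl fun q _ => ?_
  haveI := ok_finite w1 n q.1.1 hw1
  haveI := ok_finite w2 p q.1.2 hw2
  rw [Nat.card_congr (e2 q), Nat.card_prod]
  push_cast
  rfl

/-! ## splitting the pair count -/

def wcF (w1 w2 : ℕ → ℕ) (n : ℕ) : ℕ → ℕ := fun i => if i < n then w1 i else w2 (i - n)

def wgF (w1 w2 : ℕ → ℕ) (n : ℕ) : ℕ → ℕ := fun i =>
  if i < n - 1 then w1 i else if i = n - 1 then w1 (n - 1) + w2 0 else w2 (i - (n - 1))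

lemma monN_split_c (w1 w2 : ℕ → ℕ) (n p : ℕ) (κ : ℕ → ℕ+) :
    monN (wcF w1 w2 n) (n + p) κ = monN w1 n κ + monN w2 p (fun j => κ (n + j)) := by
  unfold monN
  rw [Finset.sum_range_add]
  congr 1
  · refine Finset.sum_congr rfl fun i hi => ?_
    have := Finset.mem_range.mp hi
    simp only [wcF]
    rw [if_pos this]
  · refine Finset.sum_congr rfl fun j hj => ?_
    simp only [wcF]
    rw [if_neg (by omega), Nat.add_sub_cancel_left]

lemma monN_split_g (w1 w2 : ℕ → ℕ) (n p : ℕ) (hn : 0 < n) (hp : 0 < p) (κ : ℕ → ℕ+) :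
    monN (wgF w1 w2 n) (n + p - 1) κ = monN w1 n κ + monN w2 p (fun j => κ (n - 1 + j)) := by
  obtain ⟨r, rfl⟩ : ∃ r, n = r + 1 := ⟨n - 1, by omega⟩
  obtain ⟨q, rfl⟩ : ∃ q, p = q + 1 := ⟨p - 1, by omega⟩
  have hnp : r + 1 + (q + 1) - 1 = r + (q + 1) := by omega
  have hr : r + 1 - 1 = r := by omega
  unfold monN
  rw [hnp, Finset.sum_range_add,
      Finset.sum_range_succ' (fun j => Finsupp.single (κ (r + j)) (wgF w1 w2 (r + 1) (r + j))) q,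
      Finset.sum_range_succ (fun i => Finsupp.single (κ i) (w1 i)) r,
      Finset.sum_range_succ' (fun j => Finsupp.single (κ (r + 1 - 1 + j)) (w2 j)) q]
  simp only [hr, add_zero]
  have e1 : ∀ i ∈ Finset.range r,
      Finsupp.single (κ i) (wgF w1 w2 (r + 1) i) = Finsupp.single (κ i) (w1 i) := by
    intro i hi
    have := Finset.mem_range.mp hi
    simp only [wgF]
    rw [if_pos (by omega)]
  have e2 : ∀ j ∈ Finset.range q,
      Finsupp.single (κ (r + (j + 1))) (wgF w1 w2 (r + 1) (r + (j + 1)))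
        = Finsupp.single (κ (r + (j + 1))) (w2 (j + 1)) := by
    intro j hj
    simp only [wgF]
    rw [if_neg (by omega), if_neg (by omega)]
    congr 2
    omega
  have e0 : wgF w1 w2 (r + 1) r = w1 r + w2 0 := by
    simp only [wgF]
    rw [if_neg (by omega), if_pos (by omega), hr]
  rw [Finset.sum_congr rfl e1, Finset.sum_congr rfl e2, e0, Finsupp.single_add]
  abel

/-- Step C: splitting the pair count according to whether the two end colours differ. -/
lemma card_split (w1 w2 : ℕ → ℕ) (n p : ℕ) (hn : 0 < n) (hp : 0 < p) (m : ℕ+ →₀ ℕ)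
    (hw1 : ∀ i < n, 0 < w1 i) (hw2 : ∀ i < p, 0 < w2 i) :
    Nat.card {κ : (ℕ → ℕ+) × (ℕ → ℕ+) // Ok2 w1 w2 n p m κ} =
      Nat.card {κ : ℕ → ℕ+ // Ok (wcF w1 w2 n) (n + p) m κ} +
        Nat.card {κ : ℕ → ℕ+ // Ok (wgF w1 w2 n) (n + p - 1) m κ} := by
  classical
  haveI hTfin : Finite {κ : (ℕ → ℕ+) × (ℕ → ℕ+) // Ok2 w1 w2 n p m κ} :=
    ok2_finite w1 w2 n p m hw1 hw2
  set T := {κ : (ℕ → ℕ+) × (ℕ → ℕ+) // Ok2 w1 w2 n p m κ} with hT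
  let P : T → Prop := fun t => t.1.1 (n - 1) ≠ t.1.2 0
  have hsplit : Nat.card T = Nat.card {t : T // P t} + Nat.card {t : T // ¬ P t} := by
    rw [← Nat.card_sum]
    exact (Nat.card_congr (Equiv.sumCompl P)).symm
  rw [hsplit]
  congr 1
  · -- concatenation part
    apply Nat.card_congr
    refine ⟨fun t => ⟨fun i => if i < n then t.1.1.1 i else t.1.1.2 (i - n),
        ?_, ?_, ?_⟩,
      fun s => ⟨⟨(fun i => if i < n then s.1 i else 1,
        fun j => if j < p then s.1 (n + j) else 1), ⟨?_, ?_, rfl⟩, ⟨?_, ?_, rfl⟩, ?_⟩, ?_⟩,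
      ?_, ?_⟩
    · intro i hi
      dsimp only
      rw [if_neg (by omega)]
      exact t.1.2.2.1.1 _ (by omega)
    · intro i hi
      dsimp only
      by_cases h1 : i + 1 < n
      · rw [if_pos (by omega), if_pos h1]
        exact t.1.2.1.2.1 i h1
      · by_cases h2 : i + 1 = n
        · rw [if_pos (by omega), if_neg (by omega)]
          have h3 : i + 1 - n = 0 := by omega
          have h4 : i = n - 1 := by omega
          rw [h3, h4]
          exact t.2
        · rw [if_neg (by omega), if_neg (by omega)]
          have h3 : i + 1 - n = (i - n) + 1 := by omega
          rw [h3]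
          exact t.1.2.2.1.2.1 (i - n) (by omega)
    · rw [monN_split_c]
      have c1 : monN w1 n (fun i => if i < n then t.1.1.1 i else t.1.1.2 (i - n))
          = monN w1 n t.1.1.1 :=
        monN_congr (fun _ _ => rfl) (fun i hi => if_pos hi)
      have c2 : monN w2 p
          (fun j => if n + j < n then t.1.1.1 (n + j) else t.1.1.2 (n + j - n))
          = monN w2 p t.1.1.2 :=
        monN_congr (fun _ _ => rfl) (fun j hj => by
          rw [if_neg (by omega), Nat.add_sub_cancel_left])
      rw [c1, c2]
      exact t.1.2.2.2
    · intro i hi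
      exact if_neg (by omega)
    · intro i hi
      dsimp only
      rw [if_pos (by omega), if_pos (by omega)]
      exact s.2.2.1 i (by omega)
    · intro j hj
      exact if_neg (by omega)
    · intro j hj
      dsimp only
      rw [if_pos (by omega), if_pos (by omega)]
      exact s.2.2.1 (n + j) (by omega)
    · -- sum condition
      dsimp only
      have c1 : monN w1 n (fun i => if i < n then s.1 i else 1) = monN w1 n s.1 :=
        monN_congr (fun _ _ => rfl) (fun i hi => if_pos hi)
      have c2 : monN w2 p (fun j => if j < p then s.1 (n + j) else 1)
          = monN w2 p (fun j => s.1 (n + j)) :=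
        monN_congr (fun _ _ => rfl) (fun j hj => if_pos hj)
      rw [c1, c2, ← monN_split_c]
      exact s.2.2.2
    · -- P condition
      show ¬ _ = _
      dsimp only
      rw [if_pos (by omega), if_pos (by omega)]
      have h1 := s.2.2.1 (n - 1) (by omega)
      have h2 : n - 1 + 1 = n := by omega
      rw [h2] at h1
      have h3 : n + 0 = n := by omega
      rw [h3]
      exact h1
    · -- left inverse
      intro t
      apply Subtype.ext
      apply Subtype.ext
      apply Prod.ext
      · funext i
        dsimp only
        by_cases h : i < n
        · rw [if_pos h, if_pos h]
        · rw [if_neg h]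
          exact (t.1.2.1.1 i (by omega)).symm
      · funext j
        dsimp only
        by_cases h : j < p
        · rw [if_pos h, if_neg (by omega), Nat.add_sub_cancel_left]
        · rw [if_neg h]
          exact (t.1.2.2.1.1 j (by omega)).symm
    · -- right inverse
      intro s
      apply Subtype.ext
      funext i
      dsimp only
      by_cases h : i < n
      · rw [if_pos h, if_pos h]
      · rw [if_neg h]
        by_cases h2 : i - n < p
        · rw [if_pos h2]
          have h3 : n + (i - n) = i := by omega
          rw [h3]
        · rw [if_neg h2]
          exact (s.2.1 i (by omega)).symm
  · -- glue part
    apply Nat.card_congr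
    refine ⟨fun t => ⟨fun i => if i < n then t.1.1.1 i else t.1.1.2 (i - (n - 1)),
        ?_, ?_, ?_⟩,
      fun s => ⟨⟨(fun i => if i < n then s.1 i else 1,
        fun j => if j < p then s.1 (n - 1 + j) else 1), ⟨?_, ?_, rfl⟩, ⟨?_, ?_, rfl⟩, ?_⟩, ?_⟩,
      ?_, ?_⟩
    · intro i hi
      dsimp only
      rw [if_neg (by omega)]
      exact t.1.2.2.1.1 _ (by omega)
    · intro i hi
      dsimp only
      have heq : t.1.1.1 (n - 1) = t.1.1.2 0 := not_ne_iff.mp t.2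
      by_cases h1 : i + 1 < n
      · rw [if_pos (by omega), if_pos h1]
        exact t.1.2.1.2.1 i h1
      · by_cases h2 : i + 1 = n
        · rw [if_pos (by omega), if_neg (by omega)]
          have h3 : i + 1 - (n - 1) = 1 := by omega
          have h4 : i = n - 1 := by omega
          rw [h3, h4, heq]
          exact t.1.2.2.1.2.1 0 (by omega)
        · rw [if_neg (by omega), if_neg (by omega)]
          have h3 : i + 1 - (n - 1) = (i - (n - 1)) + 1 := by omega
          rw [h3]
          exact t.1.2.2.1.2.1 (i - (n - 1)) (by omega)
    · rw [monN_split_g w1 w2 n p hn hp]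
      have heq : t.1.1.1 (n - 1) = t.1.1.2 0 := not_ne_iff.mp t.2
      have c1 : monN w1 n (fun i => if i < n then t.1.1.1 i else t.1.1.2 (i - (n - 1)))
          = monN w1 n t.1.1.1 :=
        monN_congr (fun _ _ => rfl) (fun i hi => if_pos hi)
      have c2 : monN w2 p
          (fun j => if n - 1 + j < n then t.1.1.1 (n - 1 + j) else t.1.1.2 (n - 1 + j - (n - 1)))
          = monN w2 p t.1.1.2 := by
        refine monN_congr (fun _ _ => rfl) (fun j hj => ?_)
        by_cases h : j = 0
        · subst h
          rw [if_pos (by omega)]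
          have h4 : n - 1 + 0 = n - 1 := by omega
          rw [h4, heq]
        · rw [if_neg (by omega)]
          have h5 : n - 1 + j - (n - 1) = j := by omega
          rw [h5]
      rw [c1, c2]
      exact t.1.2.2.2
    · intro i hi
      exact if_neg (by omega)
    · intro i hi
      dsimp only
      rw [if_pos (by omega), if_pos (by omega)]
      exact s.2.2.1 i (by omega)
    · intro j hj
      exact if_neg (by omega)
    · intro j hj
      dsimp only
      rw [if_pos (by omega), if_pos (by omega)]
      exact s.2.2.1 (n - 1 + j) (by omega)
    · -- sum condition
      dsimp only
      have c1 : monN w1 n (fun i => if i < n then s.1 i else 1) = monN w1 n s.1 :=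
        monN_congr (fun _ _ => rfl) (fun i hi => if_pos hi)
      have c2 : monN w2 p (fun j => if j < p then s.1 (n - 1 + j) else 1)
          = monN w2 p (fun j => s.1 (n - 1 + j)) :=
        monN_congr (fun _ _ => rfl) (fun j hj => if_pos hj)
      rw [c1, c2, ← monN_split_g w1 w2 n p hn hp]
      exact s.2.2.2
    · -- ¬P condition
      rw [not_ne_iff]
      dsimp only
      rw [if_pos (by omega), if_pos (by omega)]
      have h4 : n - 1 + 0 = n - 1 := by omega
      rw [h4]
    · -- left inverse
      intro t
      have heq : t.1.1.1 (n - 1) = t.1.1.2 0 := not_ne_iff.mp t.2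
      apply Subtype.ext
      apply Subtype.ext
      apply Prod.ext
      · funext i
        dsimp only
        by_cases h : i < n
        · rw [if_pos h, if_pos h]
        · rw [if_neg h]
          exact (t.1.2.1.1 i (by omega)).symm
      · funext j
        dsimp only
        by_cases h : j < p
        · rw [if_pos h]
          by_cases h0 : j = 0
          · subst h0
            rw [if_pos (by omega)]
            have h4 : n - 1 + 0 = n - 1 := by omega
            rw [h4, heq]
          · rw [if_neg (by omega)]
            have h5 : n - 1 + j - (n - 1) = j := by omega
            rw [h5]
        · rw [if_neg h]
          exact (t.1.2.2.1.1 j (by omega)).symm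
    · -- right inverse
      intro s
      apply Subtype.ext
      funext i
      dsimp only
      by_cases h : i < n
      · rw [if_pos h, if_pos h]
      · rw [if_neg h]
        by_cases h2 : i - (n - 1) < p
        · rw [if_pos h2]
          have h3 : n - 1 + (i - (n - 1)) = i := by omega
          rw [h3]
        · rw [if_neg h2]
          exact (s.2.1 i (by omega)).symm

/-- Master computation at the level of a single coefficient. -/
lemma master (w1 w2 wcf wgf : ℕ → ℕ) (n p kc kg : ℕ) (m : ℕ+ →₀ ℕ)
    (hn : 0 < n) (hp : 0 < p)
    (hw1 : ∀ i < n, 0 < w1 i) (hw2 : ∀ i < p, 0 < w2 i)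
    (hkc : kc = n + p) (hkg : kg = n + p - 1)
    (hwc : ∀ i < kc, wcf i = wcF w1 w2 n i)
    (hwg : ∀ i < kg, wgf i = wgF w1 w2 n i) :
    (X (pathE n) (fun i : Fin n => w1 i) * X (pathE p) (fun i : Fin p => w2 i)) m =
      X (pathE kc) (fun i : Fin kc => wcf i) m + X (pathE kg) (fun i : Fin kg => wgf i) m := by
  subst hkc
  subst hkg
  calc (X (pathE n) (fun i : Fin n => w1 i) * X (pathE p) (fun i : Fin p => w2 i)) m
      = ∑ q ∈ Finset.HasAntidiagonal.antidiagonal m, X (pathE n) (fun i : Fin n => w1 i) q.1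
          * X (pathE p) (fun i : Fin p => w2 i) q.2 := MvPowerSeries.coeff_mul (n := m) ..
    _ = ∑ q ∈ Finset.HasAntidiagonal.antidiagonal m, (Nat.card {κ : ℕ → ℕ+ // Ok w1 n q.1 κ} : ℚ)
          * (Nat.card {κ : ℕ → ℕ+ // Ok w2 p q.2 κ} : ℚ) := by
        refine Finset.sum_congr rfl fun q _ => ?_
        rw [X_path_eq, X_path_eq]
    _ = (Nat.card {κ : (ℕ → ℕ+) × (ℕ → ℕ+) // Ok2 w1 w2 n p m κ} : ℚ) :=
        (card_T w1 w2 n p m hw1 hw2).symm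
    _ = (Nat.card {κ : ℕ → ℕ+ // Ok (wcF w1 w2 n) (n + p) m κ} : ℚ)
          + (Nat.card {κ : ℕ → ℕ+ // Ok (wgF w1 w2 n) (n + p - 1) m κ} : ℚ) := by
        rw [card_split w1 w2 n p hn hp m hw1 hw2]
        push_cast
        ring
    _ = X (pathE (n + p)) (fun i : Fin (n + p) => wcf i) m
          + X (pathE (n + p - 1)) (fun i : Fin (n + p - 1) => wgf i) m := by
        rw [X_path_eq, X_path_eq]
        congr 2
        · exact Nat.card_congr (Equiv.subtypeEquivRight
            (fun κ => ok_congr_w (fun i hi => (hwc i hi).symm)))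
        · exact Nat.card_congr (Equiv.subtypeEquivRight
            (fun κ => ok_congr_w (fun i hi => (hwg i hi).symm)))

/-! ## structure of `nconcat` -/

lemma nconcat_cons_cons (a c : ℕ) (l β : List ℕ) :
    nconcat (a :: c :: l) β = a :: nconcat (c :: l) β := by
  cases β <;> rfl

lemma nconcat_eq (α β : List ℕ) (hα : α ≠ []) (hβ : β ≠ []) :
    nconcat α β = α.dropLast ++ (α.getD (α.length - 1) 0 + β.getD 0 0) :: β.tail := by
  induction α with
  | nil => exact absurd rfl hα
  | cons a l ih =>
    cases l with
    | nil =>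
      cases β with
      | nil => exact absurd rfl hβ
      | cons b β' => rfl
    | cons c l' =>
      cases β with
      | nil => exact absurd rfl hβ
      | cons b β' =>
        rw [nconcat_cons_cons, ih (by simp)]
        simp [List.dropLast, List.getD_cons_succ]

lemma nconcat_length (α β : List ℕ) (hα : α ≠ []) (hβ : β ≠ []) :
    (nconcat α β).length = α.length + β.length - 1 := by
  have hn : 0 < α.length := List.length_pos_iff.mpr hα
  have hp : 0 < β.length := List.length_pos_iff.mpr hβ
  rw [nconcat_eq α β hα hβ]
  simp [List.length_append, List.length_dropLast, List.length_tail]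
  omega

lemma nconcat_getD (α β : List ℕ) (hα : α ≠ []) (hβ : β ≠ []) (i : ℕ)
    (hi : i < α.length + β.length - 1) :
    (nconcat α β).getD i 0 = wgF (fun j => α.getD j 0) (fun j => β.getD j 0) α.length i := by
  have hn : 0 < α.length := List.length_pos_iff.mpr hα
  have hp : 0 < β.length := List.length_pos_iff.mpr hβ
  have hdl : α.dropLast.length = α.length - 1 := List.length_dropLast
  rw [nconcat_eq α β hα hβ]
  by_cases h1 : i < α.length - 1
  · rw [List.getD_append _ _ _ _ (by omega)]
    simp only [wgF]
    rw [if_pos h1]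
    rw [List.getD_eq_getElem _ _ (by omega), List.getD_eq_getElem _ _ (by omega)]
    exact List.getElem_dropLast (by omega)
  · rw [List.getD_append_right _ _ _ _ (by omega)]
    simp only [wgF]
    by_cases h2 : i = α.length - 1
    · rw [if_neg h1, if_pos h2]
      have h3 : i - α.dropLast.length = 0 := by omega
      rw [h3]
      rfl
    · rw [if_neg h1, if_neg h2]
      have h3 : i - α.dropLast.length = (i - α.length) + 1 := by omega
      rw [h3, List.getD_cons_succ]
      rw [List.getD_eq_getElem _ _ (by simp [List.length_tail]; omega),
          List.getD_eq_getElem _ _ (by omega)]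
      have h4 := List.getElem_tail (l := β) (i := i - α.length)
        (h := by simp [List.length_tail]; omega)
      rw [h4]
      congr 1
      omega

lemma append_getD (α β : List ℕ) (i : ℕ) (hi : i < α.length + β.length) :
    (α ++ β).getD i 0 = wcF (fun j => α.getD j 0) (fun j => β.getD j 0) α.length i := by
  simp only [wcF]
  by_cases h : i < α.length
  · rw [if_pos h, List.getD_append _ _ _ _ h]
  · rw [if_neg h, List.getD_append_right _ _ _ _ (by omega)]


/-- **Multiplication rule for weighted paths.** For nonempty compositions `α`, `β`:
`X_{(P_{ℓ(α)},α)} · X_{(P_{ℓ(β)},β)} = X_{(P_{ℓ(α·β)},α·β)} + X_{(P_{ℓ(α⊙β)},α⊙β)}`. -/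
theorem weighted_path_multiplication
    (α β : List ℕ) (hα : α ≠ []) (hαpos : ∀ x ∈ α, 0 < x)
    (hβ : β ≠ []) (hβpos : ∀ x ∈ β, 0 < x) :
    Xwpath α * Xwpath β = Xwpath (α ++ β) + Xwpath (nconcat α β) := by
  have hn : 0 < α.length := List.length_pos_iff.mpr hα
  have hp : 0 < β.length := List.length_pos_iff.mpr hβ
  have key : ∀ γ : List ℕ, Xwpath γ = X (pathE γ.length) (fun i : Fin γ.length => γ.getD i 0) := by
    intro γ
    have h : (fun i : Fin γ.length => γ.get i) = fun i : Fin γ.length => γ.getD (i : ℕ) 0 := by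
      funext i
      rw [List.getD_eq_getElem _ _ i.isLt]
      exact List.get_eq_getElem
    unfold Xwpath
    rw [h]
  have hw1 : ∀ i < α.length, 0 < α.getD i 0 := by
    intro i hi
    rw [List.getD_eq_getElem _ _ hi]
    exact hαpos _ (List.getElem_mem hi)
  have hw2 : ∀ i < β.length, 0 < β.getD i 0 := by
    intro i hi
    rw [List.getD_eq_getElem _ _ hi]
    exact hβpos _ (List.getElem_mem hi)
  funext m
  have := master (fun j => α.getD j 0) (fun j => β.getD j 0)
    (fun j => (α ++ β).getD j 0) (fun j => (nconcat α β).getD j 0)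
    α.length β.length (α ++ β).length (nconcat α β).length m hn hp hw1 hw2
    List.length_append (nconcat_length α β hα hβ)
    (fun i hi => append_getD α β i (by rwa [List.length_append] at hi))
    (fun i hi => nconcat_getD α β hα hβ i (by rwa [nconcat_length α β hα hβ] at hi))
  rw [key α, key β, key (α ++ β), key (nconcat α β)]
  exact this


end CSF
end
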